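/- Let P be a formula-based program, I an interpretation and α a countable ordinal such that I ⊑_α T_P(I). Write I_i = T^i_{P,α}(I) for ordinals i < ω₁ and I_∞ = T^{ω₁}_{P,α}(I). Then for every formula φ and every assignment h: (1) if deg(⟦φ⟧^I_h) < α, then ⟦φ⟧^{I_∞}_h = ⟦φ⟧^I_h (condition C1); (2) if ⟦φ⟧^{I_i}_h = T_α for some i < ω₁, then ⟦φ⟧^{I_∞}_h = T_α (condition C2); (3) if ⟦φ⟧^{I_i}_h = F_α for all i < ω₁, then ⟦φ⟧^{I_∞}_h = F_α (condition C3); (4) F_α < ⟦φ⟧^{I_∞}_h < T_α holds if and only if none of the hypotheses of C1, C2, C3 holds. -/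

import Mathlib

/-!
Infinite-valued semantics for formula-based logic programs
(Rondogiannis–Wadge style), following Lüdecke,
"Every Formula-Based Logic Program Has a Least Infinite-Valued Model".
-/

noncomputable section

namespace ILP

attribute [local instance] Classical.propDecidable

/-- The first uncountable ordinal. -/
def omega1 : Ordinal.{0} := Ordinal.omega 1

lemma omega1_isLimit : Order.IsSuccLimit omega1 := Cardinal.isSuccLimit_omega 1

lemma zero_lt_omega1 : (0 : Ordinal) < omega1 := omega1_isLimit.pos

lemma succ_lt_omega1 {a : Ordinal} (h : a < omega1) : a + 1 < omega1 := by
  rw [Ordinal.add_one_eq_succ]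
  exact omega1_isLimit.succ_lt h

/-- Pre-truth-values: `F α`, `0`, `T α` for arbitrary ordinals `α`. -/
inductive TVPre : Type 1 where
  | F : Ordinal → TVPre
  | zero : TVPre
  | T : Ordinal → TVPre

/-- A pre-truth-value is countable if its index is a countable ordinal. -/
def TVPre.countable : TVPre → Prop
  | .F a => a < omega1
  | .zero => True
  | .T a => a < omega1

/-- The set `W` of truth values:
`F_α` (false values) for countable `α`, `0`, and `T_α` (true values) for countable `α`. -/
def W : Type 1 := {v : TVPre // v.countable}

/-- The strict order on truth values:
`F_0 < F_1 < ... < 0 < ... < T_1 < T_0`. -/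
def TVPre.lt : TVPre → TVPre → Prop
  | .F a, .F b => a < b
  | .F _, .zero => True
  | .F _, .T _ => True
  | .zero, .T _ => True
  | .T a, .T b => b < a
  | _, _ => False

instance : LT W := ⟨fun x y => TVPre.lt x.1 y.1⟩

instance : LE W := ⟨fun x y => x = y ∨ x < y⟩

lemma TVPre.lt_trans {a b c : TVPre} (hab : a.lt b) (hbc : b.lt c) : a.lt c := by
  cases a <;> cases b <;> cases c <;> simp_all [TVPre.lt] <;>
    first | exact hab.trans hbc | exact hbc.trans hab

lemma TVPre.lt_irrefl {a : TVPre} (h : a.lt a) : False := by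
  cases a <;> simp_all [TVPre.lt]

instance instLinearOrderW : LinearOrder W where
  le_refl a := Or.inl rfl
  le_trans a b c hab hbc := by
    rcases hab with rfl | hab
    · exact hbc
    rcases hbc with rfl | hbc
    · exact Or.inr hab
    · exact Or.inr (TVPre.lt_trans hab hbc)
  le_antisymm a b hab hba := by
    rcases hab with rfl | hab
    · rfl
    rcases hba with rfl | hba
    · rfl
    exact absurd (TVPre.lt_trans hab hba) TVPre.lt_irrefl
  le_total a b := by
    obtain ⟨a1, ha⟩ := a
    obtain ⟨b1, hb⟩ := b
    have tri : a1 = b1 ∨ a1.lt b1 ∨ b1.lt a1 := by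
      cases a1 <;> cases b1 <;> simp [TVPre.lt] <;> (try rename_i x y) <;>
        (try rcases lt_trichotomy x y with h | h | h) <;> tauto
    rcases tri with h | h | h
    · exact Or.inl (Or.inl (Subtype.ext h))
    · exact Or.inl (Or.inr h)
    · exact Or.inr (Or.inr h)
  lt_iff_le_not_ge a b := by
    constructor
    · intro h
      refine ⟨Or.inr h, ?_⟩
      rintro (rfl | h')
      · exact TVPre.lt_irrefl h
      · exact TVPre.lt_irrefl (TVPre.lt_trans h h')
    · rintro ⟨rfl | h, h2⟩
      · exact absurd (Or.inl rfl) h2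
      · exact h
  toDecidableLE := Classical.decRel _

/-- The false value `F_α`. -/
def WF (a : Ordinal) (h : a < omega1) : W := ⟨.F a, h⟩

/-- The true value `T_α`. -/
def WT (a : Ordinal) (h : a < omega1) : W := ⟨.T a, h⟩

/-- The undefined value `0`. -/
def WZ : W := ⟨.zero, trivial⟩

/-- `deg w < α` : the degree of `w` (which is `∞` for `0`) is less than `α`. -/
def degLT (w : W) (α : Ordinal) : Prop :=
  match w.1 with
  | .F a => a < α
  | .zero => False
  | .T a => a < α

/-- The set of indices of true values occurring in `M`. -/
def TIdx (M : Set W) : Set Ordinal := {a | ∃ w ∈ M, w.1 = TVPre.T a}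

/-- The set of indices of false values occurring in `M`. -/
def FIdx (M : Set W) : Set Ordinal := {a | ∃ w ∈ M, w.1 = TVPre.F a}

lemma mem_lt_omega1_of_TIdx {M : Set W} {a : Ordinal} (h : a ∈ TIdx M) : a < omega1 := by
  obtain ⟨w, _, hw⟩ := h
  have := w.2
  rw [hw] at this
  exact this

lemma mem_lt_omega1_of_FIdx {M : Set W} {a : Ordinal} (h : a ∈ FIdx M) : a < omega1 := by
  obtain ⟨w, _, hw⟩ := h
  have := w.2
  rw [hw] at this
  exact this

/-- The least upper bound of a subset of `W`. -/
def Wsup (M : Set W) : W :=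
  if h : (TIdx M).Nonempty then
    WT (sInf (TIdx M))
      (lt_of_le_of_lt (csInf_le' h.choose_spec) (mem_lt_omega1_of_TIdx h.choose_spec))
  else if WZ ∈ M then WZ
  else if h2 : sSup (FIdx M) < omega1 then WF (sSup (FIdx M)) h2
  else WZ

/-- The greatest lower bound of a subset of `W`. -/
def Winf (M : Set W) : W :=
  if h : (FIdx M).Nonempty then
    WF (sInf (FIdx M))
      (lt_of_le_of_lt (csInf_le' h.choose_spec) (mem_lt_omega1_of_FIdx h.choose_spec))
  else if WZ ∈ M then WZ
  else if h2 : sSup (TIdx M) < omega1 then WT (sSup (TIdx M)) h2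
  else WZ

/-- The semantics of negation on `W`. -/
def Wneg : W → W
  | ⟨.F a, h⟩ => WT (a + 1) (succ_lt_omega1 h)
  | ⟨.zero, _⟩ => WZ
  | ⟨.T a, h⟩ => WF (a + 1) (succ_lt_omega1 h)

/-! ### Syntax -/

/-- A first-order language with finitely many predicate symbols (at least one),
finitely many function symbols and finitely many constants (at least one). -/
structure Language where
  nPred : ℕ
  predAr : Fin nPred → ℕ
  nFun : ℕ
  funAr : Fin nFun → ℕ
  nConst : ℕ
  npos : 1 ≤ nPred
  cpos : 1 ≤ nConst

variable {L : Language}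

/-- Terms of the language; variables are indexed by natural numbers. -/
inductive Term (L : Language) : Type where
  | var : ℕ → Term L
  | const : Fin L.nConst → Term L
  | func : (f : Fin L.nFun) → (Fin (L.funAr f) → Term L) → Term L

/-- A term is ground if it contains no variables. -/
def Term.ground : Term L → Prop
  | .var _ => False
  | .const _ => True
  | .func _ ts => ∀ i, (ts i).ground

/-- The Herbrand universe: the set of ground terms. -/
def HU (L : Language) : Type := {t : Term L // t.ground}

/-- Formulas of the language. -/
inductive Formula (L : Language) : Type where
  | verum : Formula L
  | falsum : Formula L
  | atom : (p : Fin L.nPred) → (Fin (L.predAr p) → Term L) → Formula L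
  | neg : Formula L → Formula L
  | conj : Formula L → Formula L → Formula L
  | disj : Formula L → Formula L → Formula L
  | all : ℕ → Formula L → Formula L
  | ex : ℕ → Formula L → Formula L

/-- A ground atom: a predicate symbol applied to ground terms.
The Herbrand base `H_B` is the type of ground atoms. -/
structure GroundAtom (L : Language) : Type where
  pred : Fin L.nPred
  args : Fin (L.predAr pred) → HU L

/-- An (infinite-valued Herbrand) interpretation. -/
def Interp (L : Language) : Type 1 := GroundAtom L → W

/-- Evaluation of a term under a variable assignment. -/
def Term.evalT (h : ℕ → HU L) : Term L → HU L
  | .var n => h n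
  | .const c => ⟨.const c, trivial⟩
  | .func f ts => ⟨.func f fun i => ((ts i).evalT h).1, fun i => ((ts i).evalT h).2⟩

/-- The infinite-valued semantics of formulas, relative to an interpretation and
a variable assignment. -/
def Formula.eval (I : Interp L) : Formula L → (ℕ → HU L) → W
  | .verum, _ => WT 0 zero_lt_omega1
  | .falsum, _ => WF 0 zero_lt_omega1
  | .atom p ts, h => I ⟨p, fun i => (ts i).evalT h⟩
  | .neg φ, h => Wneg (φ.eval I h)
  | .conj φ ψ, h => min (φ.eval I h) (ψ.eval I h)
  | .disj φ ψ, h => max (φ.eval I h) (ψ.eval I h)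
  | .ex v φ, h => Wsup (Set.range fun u : HU L => φ.eval I (Function.update h v u))
  | .all v φ, h => Winf (Set.range fun u : HU L => φ.eval I (Function.update h v u))

/-- The variables occurring in a term. -/
def Term.vars : Term L → Set ℕ
  | .var n => {n}
  | .const _ => ∅
  | .func _ ts => ⋃ i, (ts i).vars

/-- The free variables of a formula. -/
def Formula.freeVars : Formula L → Set ℕ
  | .verum => ∅
  | .falsum => ∅
  | .atom _ ts => ⋃ i, (ts i).vars
  | .neg φ => φ.freeVars
  | .conj φ ψ => φ.freeVars ∪ ψ.freeVars
  | .disj φ ψ => φ.freeVars ∪ ψ.freeVars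
  | .all v φ => φ.freeVars \ {v}
  | .ex v φ => φ.freeVars \ {v}

/-- Applying a substitution to a term. -/
def Term.subst (σ : ℕ → Term L) : Term L → Term L
  | .var n => σ n
  | .const c => .const c
  | .func f ts => .func f fun i => (ts i).subst σ

/-- Applying a substitution to a formula (bound variables are not substituted). -/
def Formula.subst (σ : ℕ → Term L) : Formula L → Formula L
  | .verum => .verum
  | .falsum => .falsum
  | .atom p ts => .atom p fun i => (ts i).subst σ
  | .neg φ => .neg (φ.subst σ)
  | .conj φ ψ => .conj (φ.subst σ) (ψ.subst σ)
  | .disj φ ψ => .disj (φ.subst σ) (ψ.subst σ)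
  | .all v φ => .all v (φ.subst (Function.update σ v (Term.var v)))
  | .ex v φ => .ex v (φ.subst (Function.update σ v (Term.var v)))

/-- A formula-based rule `A ← φ`: the head is an atom `P(t₁,…,tₛ)`
(hence distinct from `⊤` and `⊥`) and the body is an arbitrary formula. -/
structure Rule (L : Language) : Type where
  headPred : Fin L.nPred
  headArgs : Fin (L.predAr headPred) → Term L
  body : Formula L

/-- The head of a rule, as an atomic formula. -/
def Rule.headAtom (r : Rule L) : Formula L := .atom r.headPred r.headArgs

/-- A formula-based logic program: a finite set of formula-based rules. -/
structure Program (L : Language) : Type where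
  rules : Set (Rule L)
  finite : rules.Finite

/-- The set `P_G` of ground instances of a program `P`: pairs `(Aσ, φσ)` obtained
from a rule `A ← φ` of `P` and a substitution `σ` such that `Aσ` is a ground atom
and `φσ` has no free variables. -/
def groundInstances (P : Program L) : Set (GroundAtom L × Formula L) :=
  {Aφ | ∃ r ∈ P.rules, ∃ σ : ℕ → Term L,
    (∃ hg : ∀ i, ((r.headArgs i).subst σ).ground,
      Aφ.1 = ⟨r.headPred, fun i => ⟨(r.headArgs i).subst σ, hg i⟩⟩) ∧
    Aφ.2 = r.body.subst σ ∧ (r.body.subst σ).freeVars = ∅}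

/-- A default variable assignment (possible since there is at least one constant). -/
def defaultAssignment (L : Language) : ℕ → HU L :=
  fun _ => ⟨.const ⟨0, L.cpos⟩, trivial⟩

/-- The value of a closed formula (independent of the variable assignment). -/
def Formula.evalClosed (I : Interp L) (φ : Formula L) : W :=
  φ.eval I (defaultAssignment L)

/-- The immediate consequence operator `T_P`. -/
def TP (P : Program L) (I : Interp L) : Interp L :=
  fun A => Wsup {w | ∃ φ : Formula L, (A, φ) ∈ groundInstances P ∧ w = φ.evalClosed I}

/-- `I ∥ F_β` : the set of ground atoms receiving value `F_β` under `I`. -/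
def Ifalse (I : Interp L) (β : Ordinal) : Set (GroundAtom L) := {A | (I A).1 = TVPre.F β}

/-- `I ∥ T_β` : the set of ground atoms receiving value `T_β` under `I`. -/
def Itrue (I : Interp L) (β : Ordinal) : Set (GroundAtom L) := {A | (I A).1 = TVPre.T β}

/-- `I =_α J`. -/
def eqa (α : Ordinal) (I J : Interp L) : Prop :=
  ∀ β ≤ α, Ifalse I β = Ifalse J β ∧ Itrue I β = Itrue J β

/-- `I ⊑_α J`. -/
def sqa (α : Ordinal) (I J : Interp L) : Prop :=
  (∀ β < α, eqa β I J) ∧ Ifalse J α ⊆ Ifalse I α ∧ Itrue I α ⊆ Itrue J α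

/-- `I ⊏_α J`. -/
def sqlt (α : Ordinal) (I J : Interp L) : Prop := sqa α I J ∧ ¬ eqa α I J

/-- `I ⊑_∞ J`. -/
def sqinf (I J : Interp L) : Prop := I = J ∨ ∃ α < omega1, sqlt α I J

/-- `I` satisfies the rule `A ← φ`. -/
def satisfies (I : Interp L) (r : Rule L) : Prop :=
  ∀ h : ℕ → HU L, r.body.eval I h ≤ r.headAtom.eval I h

/-- `I` is a model of `P`. -/
def isModel (I : Interp L) (P : Program L) : Prop := ∀ r ∈ P.rules, satisfies I r

/-- The transfinite iterates `T^β_{P,α}(I)`. -/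
def iter (P : Program L) (α : Ordinal) (hα : α < omega1) (I : Interp L)
    (β : Ordinal) : Interp L :=
  Ordinal.limitRecOn β I (fun _ J => TP P J)
    (fun β _ ih A =>
      if degLT (I A) α then I A
      else if ∃ γ, ∃ hγ : γ < β, (ih γ hγ A).1 = TVPre.T α then WT α hα
      else if ∀ γ, ∀ hγ : γ < β, (ih γ hγ A).1 = TVPre.F α then WF α hα
      else WF (α + 1) (succ_lt_omega1 hα))

/-- The union `⊔_{γ<α} I_γ` of a family of interpretations. -/
def unionInterp (α : Ordinal) (hα : α < omega1) (Ig : ∀ γ, γ < α → Interp L) :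
    Interp L := fun A =>
  if h : ∃ ζ, ∃ hζ : ζ < α, ((Ig ζ hζ) A).1 = TVPre.F ζ ∨ ((Ig ζ hζ) A).1 = TVPre.T ζ
  then Ig h.choose h.choose_spec.choose A
  else WF α hα

/-- The approximants `M_α` of a program `P`. -/
def approx (P : Program L) (α : Ordinal) : Interp L :=
  if hα : α < omega1 then
    if (∀ γ, ∀ _ : γ < α, ∀ ζ, ζ < γ → eqa ζ (approx P ζ) (approx P γ)) ∧
        sqa α (unionInterp α hα fun γ _ => approx P γ)
          (TP P (unionInterp α hα fun γ _ => approx P γ))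
    then iter P α hα (unionInterp α hα fun γ _ => approx P γ) omega1
    else fun _ => WF 0 zero_lt_omega1
  else fun _ => WF 0 zero_lt_omega1
termination_by α
decreasing_by
  all_goals first | assumption | exact lt_trans ‹_› ‹_›

/-- The depth `δ_P` of a program `P`. -/
def depth (P : Program L) : Ordinal :=
  sInf {δ | δ < omega1 ∧ ∀ γ, δ ≤ γ → γ < omega1 →
    Ifalse (approx P γ) γ = ∅ ∧ Itrue (approx P γ) γ = ∅}

/-- The least infinite-valued model `M_P` of a program `P`. -/
def MP (P : Program L) : Interp L := fun A =>
  if degLT (approx P (depth P) A) (depth P) then approx P (depth P) A else WZ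

/-! ### Three-valued semantics -/

/-- The three truth values `F < 0 < T`. -/
inductive TV3 : Type where
  | F : TV3
  | Z : TV3
  | T : TV3
deriving DecidableEq

/-- Numeric coding of the three truth values. -/
def TV3.toNat : TV3 → ℕ
  | .F => 0
  | .Z => 1
  | .T => 2

instance : LinearOrder TV3 :=
  LinearOrder.lift' TV3.toNat (fun a b => by
    cases a <;> cases b <;> simp [TV3.toNat])

/-- A three-valued interpretation. -/
def Interp3 (L : Language) : Type := GroundAtom L → TV3

/-- Supremum of a set of three-valued truth values. -/
def sup3 (S : Set TV3) : TV3 :=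
  if TV3.T ∈ S then .T else if TV3.Z ∈ S then .Z else .F

/-- Infimum of a set of three-valued truth values. -/
def inf3 (S : Set TV3) : TV3 :=
  if TV3.F ∈ S then .F else if TV3.Z ∈ S then .Z else .T

/-- Three-valued negation. -/
def neg3 : TV3 → TV3
  | .F => .T
  | .Z => .Z
  | .T => .F

/-- The three-valued semantics of formulas. -/
def Formula.eval3 (K : Interp3 L) : Formula L → (ℕ → HU L) → TV3
  | .verum, _ => .T
  | .falsum, _ => .F
  | .atom p ts, h => K ⟨p, fun i => (ts i).evalT h⟩
  | .neg φ, h => neg3 (φ.eval3 K h)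
  | .conj φ ψ, h => min (φ.eval3 K h) (ψ.eval3 K h)
  | .disj φ ψ, h => max (φ.eval3 K h) (ψ.eval3 K h)
  | .ex v φ, h => sup3 (Set.range fun u : HU L => φ.eval3 K (Function.update h v u))
  | .all v φ, h => inf3 (Set.range fun u : HU L => φ.eval3 K (Function.update h v u))

/-- Collapsing all false values to `F` and all true values to `T`. -/
def collapse : W → TV3 := fun w =>
  match w.1 with
  | .F _ => .F
  | .zero => .Z
  | .T _ => .T

/-- The collapse of an infinite-valued interpretation. -/
def collapseI (I : Interp L) : Interp3 L := fun A => collapse (I A)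

/-- `K` is a three-valued model of `P`. -/
def isModel3 (K : Interp3 L) (P : Program L) : Prop :=
  ∀ r ∈ P.rules, ∀ h : ℕ → HU L, r.body.eval3 K h ≤ r.headAtom.eval3 K h

/-- The three-valued interpretation `M_{P,3}`. -/
def MP3 (P : Program L) : Interp3 L := collapseI (MP P)

/-- The negation degree of a formula. -/
def Formula.negDeg : Formula L → ℕ
  | .verum => 0
  | .falsum => 0
  | .atom _ _ => 0
  | .neg φ => φ.negDeg + 1
  | .conj φ ψ => max φ.negDeg ψ.negDeg
  | .disj φ ψ => max φ.negDeg ψ.negDeg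
  | .all _ φ => φ.negDeg
  | .ex _ φ => φ.negDeg


/-! ### Auxiliary infrastructure for the proof -/

section Aux

lemma W.ext' {v w : W} (h : v.1 = w.1) : v = w := Subtype.ext h

lemma W.ext_iff' {v w : W} : v = w ↔ v.1 = w.1 := Subtype.ext_iff

lemma W.lt_def' {v w : W} : v < w ↔ TVPre.lt v.1 w.1 := Iff.rfl

lemma W.le_def' {v w : W} : v ≤ w ↔ v = w ∨ TVPre.lt v.1 w.1 :=
  or_congr Iff.rfl Iff.rfl

lemma W.cases3 (x : W) :
    (∃ a ha, x = WF a ha) ∨ x = WZ ∨ (∃ a ha, x = WT a ha) := by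
  obtain ⟨x1, h⟩ := x
  cases x1 with
  | F a => exact .inl ⟨a, h, rfl⟩
  | zero => exact .inr (.inl rfl)
  | T a => exact .inr (.inr ⟨a, h, rfl⟩)

@[simp] lemma WZ_val : (WZ).1 = TVPre.zero := rfl
@[simp] lemma WF_val {a ha} : (WF a ha).1 = TVPre.F a := rfl
@[simp] lemma WT_val {a ha} : (WT a ha).1 = TVPre.T a := rfl

@[simp] lemma degLT_WF {a ha α} : degLT (WF a ha) α ↔ a < α := Iff.rfl
@[simp] lemma degLT_WT {a ha α} : degLT (WT a ha) α ↔ a < α := Iff.rfl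
@[simp] lemma degLT_WZ {α} : degLT WZ α ↔ False := Iff.rfl

-- equality lemmas
@[simp] lemma WF_eq_WF {a b ha hb} : WF a ha = WF b hb ↔ a = b := by
  rw [W.ext_iff']; simp [WF, WT]
@[simp] lemma WT_eq_WT {a b ha hb} : WT a ha = WT b hb ↔ a = b := by
  rw [W.ext_iff']; simp [WF, WT]
@[simp] lemma WF_ne_WT {a b ha hb} : WF a ha = WT b hb ↔ False := by
  rw [W.ext_iff']; simp [WF, WT]
@[simp] lemma WT_ne_WF {a b ha hb} : WT a ha = WF b hb ↔ False := by
  rw [W.ext_iff']; simp [WF, WT]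
@[simp] lemma WF_ne_WZ {a ha} : WF a ha = WZ ↔ False := by
  rw [W.ext_iff']; simp [WF, WZ]
@[simp] lemma WZ_ne_WF {a ha} : WZ = WF a ha ↔ False := by
  rw [W.ext_iff']; simp [WF, WZ]
@[simp] lemma WT_ne_WZ {a ha} : WT a ha = WZ ↔ False := by
  rw [W.ext_iff']; simp [WT, WZ]
@[simp] lemma WZ_ne_WT {a ha} : WZ = WT a ha ↔ False := by
  rw [W.ext_iff']; simp [WT, WZ]

-- strict order lemmas
@[simp] lemma WF_lt_WF {a b ha hb} : WF a ha < WF b hb ↔ a < b := Iff.rfl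
@[simp] lemma WT_lt_WT {a b ha hb} : WT a ha < WT b hb ↔ b < a := Iff.rfl
@[simp] lemma WF_lt_WZ {a ha} : WF a ha < WZ := trivial
@[simp] lemma WF_lt_WT {a b ha hb} : WF a ha < WT b hb := trivial
@[simp] lemma WZ_lt_WT {a ha} : WZ < WT a ha := trivial
@[simp] lemma not_WZ_lt_WF {a ha} : ¬ WZ < WF a ha := fun h => h
@[simp] lemma not_WT_lt_WF {a b ha hb} : ¬ WT a ha < WF b hb := fun h => h
@[simp] lemma not_WT_lt_WZ {a ha} : ¬ WT a ha < WZ := fun h => h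
@[simp] lemma not_WZ_lt_WZ : ¬ (WZ : W) < WZ := fun h => h

-- non-strict order lemmas
@[simp] lemma WF_le_WF {a b ha hb} : WF a ha ≤ WF b hb ↔ a ≤ b := by
  rw [W.le_def']; simp [le_iff_lt_or_eq]; tauto
@[simp] lemma WT_le_WT {a b ha hb} : WT a ha ≤ WT b hb ↔ b ≤ a := by
  rw [W.le_def']; simp [le_iff_lt_or_eq]; tauto
@[simp] lemma WF_le_WZ {a ha} : WF a ha ≤ WZ := Or.inr trivial
@[simp] lemma WF_le_WT {a b ha hb} : WF a ha ≤ WT b hb := Or.inr trivial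
@[simp] lemma WZ_le_WT {a ha} : (WZ : W) ≤ WT a ha := Or.inr trivial
@[simp] lemma WZ_le_WZ : (WZ : W) ≤ WZ := le_rfl
@[simp] lemma not_WZ_le_WF {a ha} : ¬ (WZ : W) ≤ WF a ha := by
  rw [W.le_def']; simp [TVPre.lt]
@[simp] lemma not_WT_le_WF {a b ha hb} : ¬ WT a ha ≤ WF b hb := by
  rw [W.le_def']; simp [TVPre.lt]
@[simp] lemma not_WT_le_WZ {a ha} : ¬ WT a ha ≤ WZ := by
  rw [W.le_def']; simp [TVPre.lt]

lemma le_F_char {x y : W} {b : Ordinal} (hy : y.1 = TVPre.F b) (hxy : x ≤ y) :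
    ∃ a ≤ b, x.1 = TVPre.F a := by
  rcases W.cases3 y with ⟨b', hb', rfl⟩ | rfl | ⟨b', hb', rfl⟩
  · have hb : b' = b := TVPre.F.inj hy
    subst hb
    rcases W.cases3 x with ⟨a, ha, rfl⟩ | rfl | ⟨a, ha, rfl⟩
    · exact ⟨a, WF_le_WF.1 hxy, rfl⟩
    · exact absurd hxy not_WZ_le_WF
    · exact absurd hxy not_WT_le_WF
  · exact absurd hy (fun he => TVPre.noConfusion he)
  · exact absurd hy (fun he => TVPre.noConfusion he)

lemma T_le_char {x y : W} {a : Ordinal} (hx : x.1 = TVPre.T a) (hxy : x ≤ y) :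
    ∃ b ≤ a, y.1 = TVPre.T b := by
  rcases W.cases3 x with ⟨a', ha', rfl⟩ | rfl | ⟨a', ha', rfl⟩
  · exact absurd hx (fun he => TVPre.noConfusion he)
  · exact absurd hx (fun he => TVPre.noConfusion he)
  · have ha : a' = a := TVPre.T.inj hx
    subst ha
    rcases W.cases3 y with ⟨b, hb, rfl⟩ | rfl | ⟨b, hb, rfl⟩
    · exact absurd hxy not_WT_le_WF
    · exact absurd hxy not_WT_le_WZ
    · exact ⟨b, WT_le_WT.1 hxy, rfl⟩

lemma F_le_F_iff {x y : W} {a b : Ordinal} (hx : x.1 = TVPre.F a) (hy : y.1 = TVPre.F b) :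
    x ≤ y ↔ a ≤ b := by
  rcases W.cases3 x with ⟨a', ha', rfl⟩ | rfl | ⟨a', ha', rfl⟩ <;>
    try exact absurd hx (fun he => TVPre.noConfusion he)
  rcases W.cases3 y with ⟨b', hb', rfl⟩ | rfl | ⟨b', hb', rfl⟩ <;>
    try exact absurd hy (fun he => TVPre.noConfusion he)
  cases TVPre.F.inj hx
  cases TVPre.F.inj hy
  exact WF_le_WF

lemma T_le_T_iff {x y : W} {a b : Ordinal} (hx : x.1 = TVPre.T a) (hy : y.1 = TVPre.T b) :
    x ≤ y ↔ b ≤ a := by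
  rcases W.cases3 x with ⟨a', ha', rfl⟩ | rfl | ⟨a', ha', rfl⟩ <;>
    try exact absurd hx (fun he => TVPre.noConfusion he)
  rcases W.cases3 y with ⟨b', hb', rfl⟩ | rfl | ⟨b', hb', rfl⟩ <;>
    try exact absurd hy (fun he => TVPre.noConfusion he)
  cases TVPre.T.inj hx
  cases TVPre.T.inj hy
  exact WT_le_WT

lemma F_le {x y : W} {a : Ordinal} (hx : x.1 = TVPre.F a)
    (hy : ∀ b, y.1 = TVPre.F b → a ≤ b) : x ≤ y := by
  rcases W.cases3 x with ⟨a', ha', rfl⟩ | rfl | ⟨a', ha', rfl⟩ <;>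
    try exact absurd hx (fun he => TVPre.noConfusion he)
  have ha : a' = a := TVPre.F.inj hx
  subst ha
  rcases W.cases3 y with ⟨b, hb, rfl⟩ | rfl | ⟨b, hb, rfl⟩
  · exact WF_le_WF.2 (hy b rfl)
  · exact WF_le_WZ
  · exact WF_le_WT

lemma le_T {x y : W} {a : Ordinal} (hy : y.1 = TVPre.T a)
    (hx : ∀ b, x.1 = TVPre.T b → a ≤ b) : x ≤ y := by
  rcases W.cases3 y with ⟨b', hb', rfl⟩ | rfl | ⟨b', hb', rfl⟩ <;>
    try exact absurd hy (fun he => TVPre.noConfusion he)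
  have hb : b' = a := TVPre.T.inj hy
  subst hb
  rcases W.cases3 x with ⟨b, hb, rfl⟩ | rfl | ⟨b, hb, rfl⟩
  · exact WF_le_WT
  · exact WZ_le_WT
  · exact WT_le_WT.2 (hx b rfl)

lemma between_iff {α : Ordinal} {hα : α < omega1} {x : W} :
    (WF α hα < x ∧ x < WT α hα) ↔
      (¬ degLT x α ∧ x.1 ≠ TVPre.F α ∧ x.1 ≠ TVPre.T α) := by
  rcases W.cases3 x with ⟨a, ha, rfl⟩ | rfl | ⟨a, ha, rfl⟩ <;> simp <;>
    constructor
  · intro h; exact ⟨h.le, fun e => h.ne' e⟩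
  · rintro ⟨h1, h2⟩; exact h1.lt_of_ne (Ne.symm h2)
  · intro h; exact ⟨h.le, fun e => h.ne' e⟩
  · rintro ⟨h1, h2⟩; exact h1.lt_of_ne (Ne.symm h2)

end Aux
section Rel

variable {α : Ordinal} {hα : α < omega1}

/-- The value-level version of `⊑_α` : either the two values are equal, or the
first lies in `[F_α, T_α)` and the second in `(F_α, T_α]`. -/
def Rel (α : Ordinal) (v w : W) : Prop :=
  v = w ∨ ((¬ degLT v α ∧ v.1 ≠ TVPre.T α) ∧ (¬ degLT w α ∧ w.1 ≠ TVPre.F α))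

lemma Rel.refl (v : W) : Rel α v v := Or.inl rfl

lemma Rel.trans {u v w : W} (h1 : Rel α u v) (h2 : Rel α v w) : Rel α u w := by
  rcases h1 with rfl | h1
  · exact h2
  rcases h2 with rfl | h2
  · exact Or.inr h1
  · exact Or.inr ⟨h1.1, h2.2⟩

lemma rel_left_deg {v w : W} (h : Rel α v w) (hd : degLT v α) : w = v := by
  rcases h with rfl | h
  · rfl
  · exact absurd hd h.1.1

lemma rel_right_deg {v w : W} (h : Rel α v w) (hd : degLT w α) : v = w := by
  rcases h with rfl | h
  · rfl
  · exact absurd hd h.2.1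

lemma rel_T {v w : W} (h : Rel α v w) (hv : v.1 = TVPre.T α) : w.1 = TVPre.T α := by
  rcases h with rfl | h
  · exact hv
  · exact absurd hv h.1.2

lemma rel_F {v w : W} (h : Rel α v w) (hw : w.1 = TVPre.F α) : v.1 = TVPre.F α := by
  rcases h with rfl | h
  · exact hw
  · exact absurd hw h.2.2

lemma rel_not_deg {v w : W} (h : Rel α v w) (hv : ¬ degLT v α) : ¬ degLT w α := by
  rcases h with rfl | h
  · exact hv
  · exact h.2.1

lemma rel_not_deg' {v w : W} (h : Rel α v w) (hw : ¬ degLT w α) : ¬ degLT v α := by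
  rcases h with rfl | h
  · exact hw
  · exact h.1.1

/-- `x ∈ [F_α, T_α)` in order terms. -/
lemma left_mem_iff {x : W} :
    (¬ degLT x α ∧ x.1 ≠ TVPre.T α) ↔ (WF α hα ≤ x ∧ x < WT α hα) := by
  rcases W.cases3 x with ⟨a, ha, rfl⟩ | rfl | ⟨a, ha, rfl⟩ <;> simp
  constructor
  · rintro ⟨h1, h2⟩; exact h1.lt_of_ne (Ne.symm h2)
  · intro h; exact ⟨h.le, h.ne'⟩

/-- `x ∈ (F_α, T_α]` in order terms. -/
lemma right_mem_iff {x : W} :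
    (¬ degLT x α ∧ x.1 ≠ TVPre.F α) ↔ (WF α hα < x ∧ x ≤ WT α hα) := by
  rcases W.cases3 x with ⟨a, ha, rfl⟩ | rfl | ⟨a, ha, rfl⟩ <;> simp
  constructor
  · rintro ⟨h1, h2⟩; exact h1.lt_of_ne (Ne.symm h2)
  · intro h; exact ⟨h.le, h.ne'⟩

@[simp] lemma Wneg_WF {a ha} : Wneg (WF a ha) = WT (a + 1) (succ_lt_omega1 ha) := rfl
@[simp] lemma Wneg_WZ : Wneg WZ = WZ := rfl
@[simp] lemma Wneg_WT {a ha} : Wneg (WT a ha) = WF (a + 1) (succ_lt_omega1 ha) := rfl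

lemma lt_add_one_of_le {α a : Ordinal} (h : α ≤ a) : α < a + 1 :=
  lt_of_le_of_lt h (by rw [Ordinal.add_one_eq_succ]; exact Order.lt_succ a)

lemma neg_notdeg {α : Ordinal} {x : W} (hx : ¬ degLT x α) :
    ¬ degLT (Wneg x) α ∧ (Wneg x).1 ≠ TVPre.T α ∧
      ((x.1 ≠ TVPre.F α) → (Wneg x).1 ≠ TVPre.F α) := by
  rcases W.cases3 x with ⟨a, ha, rfl⟩ | rfl | ⟨a, ha, rfl⟩
  · rw [degLT_WF] at hx
    have h' : α < a + 1 := lt_add_one_of_le (not_lt.1 hx)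
    rw [Wneg_WF]
    exact ⟨by rw [degLT_WT]; exact not_lt.2 h'.le,
      fun he => h'.ne' (TVPre.T.inj he), fun _ he => TVPre.noConfusion he⟩
  · rw [Wneg_WZ]
    exact ⟨hx, fun he => TVPre.noConfusion he, fun _ he => TVPre.noConfusion he⟩
  · rw [degLT_WT] at hx
    have h' : α < a + 1 := lt_add_one_of_le (not_lt.1 hx)
    rw [Wneg_WT]
    exact ⟨by rw [degLT_WF]; exact not_lt.2 h'.le,
      fun he => TVPre.noConfusion he, fun _ he => h'.ne' (TVPre.F.inj he)⟩

lemma Rel.neg {v w : W} (h : Rel α v w) : Rel α (Wneg v) (Wneg w) := by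
  rcases h with rfl | ⟨⟨hv1, hv2⟩, ⟨hw1, hw2⟩⟩
  · exact Or.inl rfl
  · exact Or.inr ⟨⟨(neg_notdeg hv1).1, (neg_notdeg hv1).2.1⟩,
      ⟨(neg_notdeg hw1).1, (neg_notdeg hw1).2.2 hw2⟩⟩

lemma Rel.min' {v1 v2 w1 w2 : W} (h1 : Rel α v1 w1) (h2 : Rel α v2 w2)
    (hα : α < omega1) : Rel α (min v1 v2) (min w1 w2) := by
  rcases h1 with rfl | ⟨hL1, hR1⟩
  · rcases h2 with rfl | ⟨hL2, hR2⟩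
    · exact Or.inl rfl
    · -- v1 = w1, second pair in the interval
      rcases le_or_gt v1 (WF α hα) with hv1 | hv1
      · left
        rw [min_eq_left (hv1.trans ((left_mem_iff (hα := hα)).1 hL2).1),
          min_eq_left (hv1.trans ((right_mem_iff (hα := hα)).1 hR2).1.le)]
      · right
        obtain ⟨hL2a, hL2b⟩ := (left_mem_iff (hα := hα)).1 hL2
        obtain ⟨hR2a, hR2b⟩ := (right_mem_iff (hα := hα)).1 hR2
        constructor
        · exact (left_mem_iff (hα := hα)).2
            ⟨le_min hv1.le hL2a, lt_of_le_of_lt (min_le_right _ _) hL2b⟩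
        · exact (right_mem_iff (hα := hα)).2
            ⟨lt_min hv1 hR2a, le_trans (min_le_right _ _) hR2b⟩
  · rcases h2 with rfl | ⟨hL2, hR2⟩
    · -- second pair equal, first in interval
      rcases le_or_gt v2 (WF α hα) with hv2 | hv2
      · left
        rw [min_eq_right (hv2.trans ((left_mem_iff (hα := hα)).1 hL1).1),
          min_eq_right (hv2.trans ((right_mem_iff (hα := hα)).1 hR1).1.le)]
      · right
        obtain ⟨hL1a, hL1b⟩ := (left_mem_iff (hα := hα)).1 hL1
        obtain ⟨hR1a, hR1b⟩ := (right_mem_iff (hα := hα)).1 hR1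
        constructor
        · exact (left_mem_iff (hα := hα)).2
            ⟨le_min hL1a hv2.le, lt_of_le_of_lt (min_le_left _ _) hL1b⟩
        · exact (right_mem_iff (hα := hα)).2
            ⟨lt_min hR1a hv2, le_trans (min_le_left _ _) hR1b⟩
    · right
      obtain ⟨hL1a, hL1b⟩ := (left_mem_iff (hα := hα)).1 hL1
      obtain ⟨hR1a, hR1b⟩ := (right_mem_iff (hα := hα)).1 hR1
      obtain ⟨hL2a, hL2b⟩ := (left_mem_iff (hα := hα)).1 hL2
      obtain ⟨hR2a, hR2b⟩ := (right_mem_iff (hα := hα)).1 hR2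
      constructor
      · exact (left_mem_iff (hα := hα)).2
          ⟨le_min hL1a hL2a, lt_of_le_of_lt (min_le_left _ _) hL1b⟩
      · exact (right_mem_iff (hα := hα)).2
          ⟨lt_min hR1a hR2a, le_trans (min_le_left _ _) hR1b⟩

lemma Rel.max' {v1 v2 w1 w2 : W} (h1 : Rel α v1 w1) (h2 : Rel α v2 w2)
    (hα : α < omega1) : Rel α (max v1 v2) (max w1 w2) := by
  rcases h1 with rfl | ⟨hL1, hR1⟩
  · rcases h2 with rfl | ⟨hL2, hR2⟩
    · exact Or.inl rfl
    · rcases le_or_gt (WT α hα) v1 with hv1 | hv1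
      · left
        rw [max_eq_left (le_trans ((left_mem_iff (hα := hα)).1 hL2).2.le hv1),
          max_eq_left (le_trans ((right_mem_iff (hα := hα)).1 hR2).2 hv1)]
      · right
        obtain ⟨hL2a, hL2b⟩ := (left_mem_iff (hα := hα)).1 hL2
        obtain ⟨hR2a, hR2b⟩ := (right_mem_iff (hα := hα)).1 hR2
        constructor
        · exact (left_mem_iff (hα := hα)).2
            ⟨le_trans hL2a (le_max_right _ _), max_lt hv1 hL2b⟩
        · exact (right_mem_iff (hα := hα)).2
            ⟨lt_of_lt_of_le hR2a (le_max_right _ _), max_le hv1.le hR2b⟩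
  · rcases h2 with rfl | ⟨hL2, hR2⟩
    · rcases le_or_gt (WT α hα) v2 with hv2 | hv2
      · left
        rw [max_eq_right (le_trans ((left_mem_iff (hα := hα)).1 hL1).2.le hv2),
          max_eq_right (le_trans ((right_mem_iff (hα := hα)).1 hR1).2 hv2)]
      · right
        obtain ⟨hL1a, hL1b⟩ := (left_mem_iff (hα := hα)).1 hL1
        obtain ⟨hR1a, hR1b⟩ := (right_mem_iff (hα := hα)).1 hR1
        constructor
        · exact (left_mem_iff (hα := hα)).2
            ⟨le_trans hL1a (le_max_left _ _), max_lt hL1b hv2⟩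
        · exact (right_mem_iff (hα := hα)).2
            ⟨lt_of_lt_of_le hR1a (le_max_left _ _), max_le hR1b hv2.le⟩
    · right
      obtain ⟨hL1a, hL1b⟩ := (left_mem_iff (hα := hα)).1 hL1
      obtain ⟨hR1a, hR1b⟩ := (right_mem_iff (hα := hα)).1 hR1
      obtain ⟨hL2a, hL2b⟩ := (left_mem_iff (hα := hα)).1 hL2
      obtain ⟨hR2a, hR2b⟩ := (right_mem_iff (hα := hα)).1 hR2
      constructor
      · exact (left_mem_iff (hα := hα)).2
          ⟨le_trans hL1a (le_max_left _ _), max_lt hL1b hL2b⟩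
      · exact (right_mem_iff (hα := hα)).2
          ⟨lt_of_lt_of_le hR1a (le_max_left _ _), max_le hR1b hR2b⟩

end Rel
section SupInf

lemma FIdx_bddAbove (M : Set W) : BddAbove (FIdx M) :=
  ⟨omega1, fun _ hc => (mem_lt_omega1_of_FIdx hc).le⟩

lemma TIdx_bddAbove (M : Set W) : BddAbove (TIdx M) :=
  ⟨omega1, fun _ hc => (mem_lt_omega1_of_TIdx hc).le⟩

lemma wsup_T_iff {M : Set W} {b : Ordinal} :
    (Wsup M).1 = TVPre.T b ↔
      ((∃ w ∈ M, w.1 = TVPre.T b) ∧ ∀ w ∈ M, ∀ c, w.1 = TVPre.T c → b ≤ c) := by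
  rw [Wsup]
  split_ifs with h1 h2 h3
  · rw [WT_val]
    constructor
    · rintro he
      have hmem := csInf_mem h1
      rw [TVPre.T.inj he] at hmem
      exact ⟨hmem, fun w hw c hc => by
        rw [← TVPre.T.inj he]; exact csInf_le' ⟨w, hw, hc⟩⟩
    · rintro ⟨hmem, hmin⟩
      have h1' : sInf (TIdx M) = b := le_antisymm (csInf_le' hmem)
        (le_csInf h1 (fun c hc => by obtain ⟨w, hw, hwc⟩ := hc; exact hmin w hw c hwc))
      rw [h1']
  · simp only [WZ_val]
    constructor
    · intro he; exact absurd he.symm (fun h => TVPre.noConfusion h)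
    · rintro ⟨⟨w, hw, hwT⟩, -⟩; exact absurd ⟨_, w, hw, hwT⟩ h1
  · simp only [WF_val]
    constructor
    · intro he; exact absurd he (fun h => TVPre.noConfusion h)
    · rintro ⟨⟨w, hw, hwT⟩, -⟩; exact absurd ⟨_, w, hw, hwT⟩ h1
  · simp only [WZ_val]
    constructor
    · intro he; exact absurd he.symm (fun h => TVPre.noConfusion h)
    · rintro ⟨⟨w, hw, hwT⟩, -⟩; exact absurd ⟨_, w, hw, hwT⟩ h1

lemma wsup_T_of {M : Set W} {b : Ordinal} (hb : b < omega1)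
    (hmem : ∃ w ∈ M, w.1 = TVPre.T b) (hmin : ∀ w ∈ M, ∀ c, w.1 = TVPre.T c → b ≤ c) :
    Wsup M = WT b hb :=
  W.ext' (wsup_T_iff.2 ⟨hmem, hmin⟩)

lemma wsup_F_char {M : Set W} {b : Ordinal} (h : (Wsup M).1 = TVPre.F b) :
    ∀ w ∈ M, ∃ c ≤ b, w.1 = TVPre.F c := by
  rw [Wsup] at h
  split_ifs at h with h1 h2 h3
  · exact absurd h (fun he => TVPre.noConfusion he)
  · exact absurd h (fun he => TVPre.noConfusion he)
  · rw [WF_val] at h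
    intro w hw
    rcases W.cases3 w with ⟨a, ha, rfl⟩ | rfl | ⟨a, ha, rfl⟩
    · refine ⟨a, ?_, rfl⟩
      rw [← TVPre.F.inj h]
      exact le_csSup (FIdx_bddAbove M) ⟨_, hw, rfl⟩
    · exact absurd hw h2
    · exact absurd ⟨_, _, hw, rfl⟩ h1
  · exact absurd h (fun he => TVPre.noConfusion he)

lemma wsup_F_of {M : Set W} {b : Ordinal} (hb : b < omega1)
    (hmem : ∃ w ∈ M, w.1 = TVPre.F b) (hub : ∀ w ∈ M, ∃ c ≤ b, w.1 = TVPre.F c) :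
    Wsup M = WF b hb := by
  have hT : ¬ (TIdx M).Nonempty := by
    rintro ⟨c, w, hw, hwc⟩
    obtain ⟨d, -, hd⟩ := hub w hw
    rw [hd] at hwc; exact TVPre.noConfusion hwc
  have hZ : WZ ∉ M := by
    intro hw
    obtain ⟨d, -, hd⟩ := hub _ hw
    exact TVPre.noConfusion hd
  have hsup : sSup (FIdx M) = b := by
    obtain ⟨w, hw, hwb⟩ := hmem
    refine le_antisymm (csSup_le ⟨b, w, hw, hwb⟩ ?_) (le_csSup (FIdx_bddAbove M) ⟨w, hw, hwb⟩)
    rintro c ⟨w', hw', hwc⟩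
    obtain ⟨d, hd, hd'⟩ := hub w' hw'
    rw [hd'] at hwc
    rw [← TVPre.F.inj hwc]; exact hd
  rw [Wsup, dif_neg hT, if_neg hZ, dif_pos (hsup ▸ hb)]
  exact W.ext' (by rw [WF_val, WF_val, hsup])

lemma wsup_zero_char {M : Set W} (h : (Wsup M).1 = TVPre.zero) :
    ∀ w ∈ M, ∀ c, w.1 ≠ TVPre.T c := by
  rintro w hw c hwc
  rw [Wsup] at h
  split_ifs at h with h1 h2 h3
  · exact TVPre.noConfusion h
  all_goals exact h1 ⟨c, w, hw, hwc⟩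

lemma wsup_T_lower {M : Set W} {w : W} {c : Ordinal} (hw : w ∈ M) (hwc : w.1 = TVPre.T c) :
    ∃ d ≤ c, (Wsup M).1 = TVPre.T d := by
  have h1 : (TIdx M).Nonempty := ⟨c, w, hw, hwc⟩
  refine ⟨sInf (TIdx M), csInf_le' ⟨w, hw, hwc⟩, ?_⟩
  rw [Wsup, dif_pos h1, WT_val]

lemma winf_F_iff {M : Set W} {b : Ordinal} :
    (Winf M).1 = TVPre.F b ↔
      ((∃ w ∈ M, w.1 = TVPre.F b) ∧ ∀ w ∈ M, ∀ c, w.1 = TVPre.F c → b ≤ c) := by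
  rw [Winf]
  split_ifs with h1 h2 h3
  · rw [WF_val]
    constructor
    · rintro he
      have hmem := csInf_mem h1
      rw [TVPre.F.inj he] at hmem
      exact ⟨hmem, fun w hw c hc => by
        rw [← TVPre.F.inj he]; exact csInf_le' ⟨w, hw, hc⟩⟩
    · rintro ⟨hmem, hmin⟩
      have h1' : sInf (FIdx M) = b := le_antisymm (csInf_le' hmem)
        (le_csInf h1 (fun c hc => by obtain ⟨w, hw, hwc⟩ := hc; exact hmin w hw c hwc))
      rw [h1']
  · simp only [WZ_val]
    constructor
    · intro he; exact absurd he.symm (fun h => TVPre.noConfusion h)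
    · rintro ⟨⟨w, hw, hwT⟩, -⟩; exact absurd ⟨_, w, hw, hwT⟩ h1
  · simp only [WT_val]
    constructor
    · intro he; exact absurd he (fun h => TVPre.noConfusion h)
    · rintro ⟨⟨w, hw, hwT⟩, -⟩; exact absurd ⟨_, w, hw, hwT⟩ h1
  · simp only [WZ_val]
    constructor
    · intro he; exact absurd he.symm (fun h => TVPre.noConfusion h)
    · rintro ⟨⟨w, hw, hwT⟩, -⟩; exact absurd ⟨_, w, hw, hwT⟩ h1

lemma winf_F_of {M : Set W} {b : Ordinal} (hb : b < omega1)
    (hmem : ∃ w ∈ M, w.1 = TVPre.F b) (hmin : ∀ w ∈ M, ∀ c, w.1 = TVPre.F c → b ≤ c) :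
    Winf M = WF b hb :=
  W.ext' (winf_F_iff.2 ⟨hmem, hmin⟩)

lemma winf_T_char {M : Set W} {b : Ordinal} (h : (Winf M).1 = TVPre.T b) :
    ∀ w ∈ M, ∃ c ≤ b, w.1 = TVPre.T c := by
  rw [Winf] at h
  split_ifs at h with h1 h2 h3
  · exact absurd h (fun he => TVPre.noConfusion he)
  · exact absurd h (fun he => TVPre.noConfusion he)
  · rw [WT_val] at h
    intro w hw
    rcases W.cases3 w with ⟨a, ha, rfl⟩ | rfl | ⟨a, ha, rfl⟩
    · exact absurd ⟨_, _, hw, rfl⟩ h1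
    · exact absurd hw h2
    · refine ⟨a, ?_, rfl⟩
      rw [← TVPre.T.inj h]
      exact le_csSup (TIdx_bddAbove M) ⟨_, hw, rfl⟩
  · exact absurd h (fun he => TVPre.noConfusion he)

lemma winf_T_of {M : Set W} {b : Ordinal} (hb : b < omega1)
    (hmem : ∃ w ∈ M, w.1 = TVPre.T b) (hub : ∀ w ∈ M, ∃ c ≤ b, w.1 = TVPre.T c) :
    Winf M = WT b hb := by
  have hF : ¬ (FIdx M).Nonempty := by
    rintro ⟨c, w, hw, hwc⟩
    obtain ⟨d, -, hd⟩ := hub w hw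
    rw [hd] at hwc; exact TVPre.noConfusion hwc
  have hZ : WZ ∉ M := by
    intro hw
    obtain ⟨d, -, hd⟩ := hub _ hw
    exact TVPre.noConfusion hd
  have hsup : sSup (TIdx M) = b := by
    obtain ⟨w, hw, hwb⟩ := hmem
    refine le_antisymm (csSup_le ⟨b, w, hw, hwb⟩ ?_) (le_csSup (TIdx_bddAbove M) ⟨w, hw, hwb⟩)
    rintro c ⟨w', hw', hwc⟩
    obtain ⟨d, hd, hd'⟩ := hub w' hw'
    rw [hd'] at hwc
    rw [← TVPre.T.inj hwc]; exact hd
  rw [Winf, dif_neg hF, if_neg hZ, dif_pos (hsup ▸ hb)]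
  exact W.ext' (by rw [WT_val, WT_val, hsup])

lemma winf_zero_char {M : Set W} (h : (Winf M).1 = TVPre.zero) :
    ∀ w ∈ M, ∀ c, w.1 ≠ TVPre.F c := by
  rintro w hw c hwc
  rw [Winf] at h
  split_ifs at h with h1 h2 h3
  · exact TVPre.noConfusion h
  all_goals exact h1 ⟨c, w, hw, hwc⟩

lemma winf_F_lower {M : Set W} {w : W} {c : Ordinal} (hw : w ∈ M) (hwc : w.1 = TVPre.F c) :
    ∃ d ≤ c, (Winf M).1 = TVPre.F d := by
  have h1 : (FIdx M).Nonempty := ⟨c, w, hw, hwc⟩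
  refine ⟨sInf (FIdx M), csInf_le' ⟨w, hw, hwc⟩, ?_⟩
  rw [Winf, dif_pos h1, WF_val]

end SupInf
section RelSup

variable {L : Language} {α : Ordinal}

lemma deg_F {x : W} {c α : Ordinal} (hx : x.1 = TVPre.F c) : degLT x α ↔ c < α := by
  rcases W.cases3 x with ⟨a, ha, rfl⟩ | rfl | ⟨a, ha, rfl⟩ <;> simp_all

lemma deg_T {x : W} {c α : Ordinal} (hx : x.1 = TVPre.T c) : degLT x α ↔ c < α := by
  rcases W.cases3 x with ⟨a, ha, rfl⟩ | rfl | ⟨a, ha, rfl⟩ <;> simp_all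

lemma deg_Z {x : W} {α : Ordinal} (hx : x.1 = TVPre.zero) : ¬ degLT x α := by
  rcases W.cases3 x with ⟨a, ha, rfl⟩ | rfl | ⟨a, ha, rfl⟩ <;> simp_all

lemma Lmem_F {b : Ordinal} (hb : α ≤ b) {x : W} (hx : x.1 = TVPre.F b) :
    ¬ degLT x α ∧ x.1 ≠ TVPre.T α :=
  ⟨by rw [deg_F hx]; exact not_lt.2 hb, by rw [hx]; exact fun he => TVPre.noConfusion he⟩

lemma Lmem_T {b : Ordinal} (hb : α < b) {x : W} (hx : x.1 = TVPre.T b) :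
    ¬ degLT x α ∧ x.1 ≠ TVPre.T α :=
  ⟨by rw [deg_T hx]; exact not_lt.2 hb.le,
   by rw [hx]; exact fun he => hb.ne' (TVPre.T.inj he)⟩

lemma Lmem_Z {x : W} (hx : x.1 = TVPre.zero) :
    ¬ degLT x α ∧ x.1 ≠ TVPre.T α :=
  ⟨deg_Z hx, by rw [hx]; exact fun he => TVPre.noConfusion he⟩

lemma Rmem_F {b : Ordinal} (hb : α < b) {x : W} (hx : x.1 = TVPre.F b) :
    ¬ degLT x α ∧ x.1 ≠ TVPre.F α :=
  ⟨by rw [deg_F hx]; exact not_lt.2 hb.le,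
   by rw [hx]; exact fun he => hb.ne' (TVPre.F.inj he)⟩

lemma Rmem_T {b : Ordinal} (hb : α ≤ b) {x : W} (hx : x.1 = TVPre.T b) :
    ¬ degLT x α ∧ x.1 ≠ TVPre.F α :=
  ⟨by rw [deg_T hx]; exact not_lt.2 hb, by rw [hx]; exact fun he => TVPre.noConfusion he⟩

lemma Rmem_Z {x : W} (hx : x.1 = TVPre.zero) :
    ¬ degLT x α ∧ x.1 ≠ TVPre.F α :=
  ⟨deg_Z hx, by rw [hx]; exact fun he => TVPre.noConfusion he⟩

lemma Rel.wsup {ι : Sort*} {f g : ι → W} (hfg : ∀ u, Rel α (f u) (g u))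
    (hα : α < omega1) : Rel α (Wsup (Set.range f)) (Wsup (Set.range g)) := by
  have hcongr : (∀ u, f u = g u) → Wsup (Set.range f) = Wsup (Set.range g) := by
    intro he; rw [funext he]
  have hcl1 : ∀ b ≤ α, (Wsup (Set.range g)).1 = TVPre.F b → ∀ u, f u = g u := by
    intro b hb hF u
    obtain ⟨c, hc, hgu⟩ := wsup_F_char hF (g u) ⟨u, rfl⟩
    rcases hfg u with he | ⟨-, hw1, hw2⟩
    · exact he
    · rcases lt_or_eq_of_le (hc.trans hb) with hlt | heq
      · exact absurd ((deg_F hgu).2 hlt) hw1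
      · rw [heq] at hgu; exact absurd hgu hw2
  have hcl2 : ∀ c < α, (Wsup (Set.range g)).1 = TVPre.T c → ∃ u, (f u).1 = TVPre.T c := by
    intro c hc hT
    obtain ⟨⟨w, ⟨u, rfl⟩, hw⟩, -⟩ := wsup_T_iff.1 hT
    exact ⟨u, by rw [rel_right_deg (hfg u) ((deg_T hw).2 hc)]; exact hw⟩
  rcases W.cases3 (Wsup (Set.range f)) with ⟨b, hb, hsf⟩ | hsf | ⟨b, hb, hsf⟩
  · have hsf1 : (Wsup (Set.range f)).1 = TVPre.F b := by rw [hsf]; rfl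
    -- exclusion helpers used when b ≥ α
    have hexF : α ≤ b → ∀ c ≤ α, b ≠ c → (Wsup (Set.range g)).1 ≠ TVPre.F c := by
      intro hab c hcα hbc hsg1
      have hval : (Wsup (Set.range f)).1 = (Wsup (Set.range g)).1 := by
        rw [hcongr (hcl1 c hcα hsg1)]
      rw [hsf1, hsg1] at hval
      exact hbc (TVPre.F.inj hval)
    have hexT : ∀ c < α, (Wsup (Set.range g)).1 ≠ TVPre.T c := by
      intro c hcα hsg1
      obtain ⟨u, hu⟩ := hcl2 c hcα hsg1
      obtain ⟨d, -, hfu⟩ := wsup_F_char hsf1 (f u) ⟨u, rfl⟩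
      rw [hfu] at hu; exact TVPre.noConfusion hu
    rcases lt_trichotomy b α with hbα | hbα | hbα
    · refine Or.inl (hcongr fun u => ?_)
      obtain ⟨c, hc, hfu⟩ := wsup_F_char hsf1 (f u) ⟨u, rfl⟩
      exact (rel_left_deg (hfg u) ((deg_F hfu).2 (lt_of_le_of_lt hc hbα))).symm
    · rcases W.cases3 (Wsup (Set.range g)) with ⟨c, hc, hsg⟩ | hsg | ⟨c, hc, hsg⟩
      · have hsg1 : (Wsup (Set.range g)).1 = TVPre.F c := by rw [hsg]; rfl
        rcases le_or_gt c α with hcα | hcα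
        · exact Or.inl (hcongr (hcl1 c hcα hsg1))
        · exact Or.inr ⟨Lmem_F hbα.ge hsf1, Rmem_F hcα hsg1⟩
      · exact Or.inr ⟨Lmem_F hbα.ge hsf1, Rmem_Z (by rw [hsg]; rfl)⟩
      · have hsg1 : (Wsup (Set.range g)).1 = TVPre.T c := by rw [hsg]; rfl
        rcases lt_or_ge c α with hcα | hcα
        · exact absurd hsg1 (hexT c hcα)
        · exact Or.inr ⟨Lmem_F hbα.ge hsf1, Rmem_T hcα hsg1⟩
    · rcases W.cases3 (Wsup (Set.range g)) with ⟨c, hc, hsg⟩ | hsg | ⟨c, hc, hsg⟩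
      · have hsg1 : (Wsup (Set.range g)).1 = TVPre.F c := by rw [hsg]; rfl
        rcases le_or_gt c α with hcα | hcα
        · exact absurd hsg1 (hexF hbα.le c hcα (fun he => absurd hbα
            (not_lt.2 (he ▸ hcα))))
        · exact Or.inr ⟨Lmem_F hbα.le hsf1, Rmem_F hcα hsg1⟩
      · exact Or.inr ⟨Lmem_F hbα.le hsf1, Rmem_Z (by rw [hsg]; rfl)⟩
      · have hsg1 : (Wsup (Set.range g)).1 = TVPre.T c := by rw [hsg]; rfl
        rcases lt_or_ge c α with hcα | hcα
        · exact absurd hsg1 (hexT c hcα)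
        · exact Or.inr ⟨Lmem_F hbα.le hsf1, Rmem_T hcα hsg1⟩
  · have hsf1 : (Wsup (Set.range f)).1 = TVPre.zero := by rw [hsf]; rfl
    have hexF : ∀ c ≤ α, (Wsup (Set.range g)).1 ≠ TVPre.F c := by
      intro c hcα hsg1
      have hval : (Wsup (Set.range f)).1 = (Wsup (Set.range g)).1 := by
        rw [hcongr (hcl1 c hcα hsg1)]
      rw [hsf1, hsg1] at hval
      exact TVPre.noConfusion hval
    have hexT : ∀ c < α, (Wsup (Set.range g)).1 ≠ TVPre.T c := by
      intro c hcα hsg1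
      obtain ⟨u, hu⟩ := hcl2 c hcα hsg1
      exact absurd hu (wsup_zero_char hsf1 (f u) ⟨u, rfl⟩ c)
    rcases W.cases3 (Wsup (Set.range g)) with ⟨c, hc, hsg⟩ | hsg | ⟨c, hc, hsg⟩
    · have hsg1 : (Wsup (Set.range g)).1 = TVPre.F c := by rw [hsg]; rfl
      rcases le_or_gt c α with hcα | hcα
      · exact absurd hsg1 (hexF c hcα)
      · exact Or.inr ⟨Lmem_Z hsf1, Rmem_F hcα hsg1⟩
    · exact Or.inr ⟨Lmem_Z hsf1, Rmem_Z (by rw [hsg]; rfl)⟩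
    · have hsg1 : (Wsup (Set.range g)).1 = TVPre.T c := by rw [hsg]; rfl
      rcases lt_or_ge c α with hcα | hcα
      · exact absurd hsg1 (hexT c hcα)
      · exact Or.inr ⟨Lmem_Z hsf1, Rmem_T hcα hsg1⟩
  · have hsf1 : (Wsup (Set.range f)).1 = TVPre.T b := by rw [hsf]; rfl
    obtain ⟨⟨w, ⟨u₁, rfl⟩, hu₁⟩, hminf⟩ := wsup_T_iff.1 hsf1
    rcases lt_trichotomy b α with hbα | hbα | hbα
    · have hgmem : (g u₁).1 = TVPre.T b := by
        rw [rel_left_deg (hfg u₁) ((deg_T hu₁).2 hbα)]; exact hu₁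
      have hgmin : ∀ w ∈ Set.range g, ∀ c, w.1 = TVPre.T c → b ≤ c := by
        rintro w ⟨u, rfl⟩ c hguc
        rcases hfg u with he | ⟨-, hw1, -⟩
        · exact hminf (f u) ⟨u, rfl⟩ c (he ▸ hguc)
        · exact le_of_lt (lt_of_lt_of_le hbα
            (not_lt.1 (fun hc => hw1 ((deg_T hguc).2 hc))))
      have hgsup : Wsup (Set.range g) = WT b hb :=
        wsup_T_of hb ⟨g u₁, ⟨u₁, rfl⟩, hgmem⟩ hgmin
      left; rw [hsf, hgsup]
    · have hu₁' : (f u₁).1 = TVPre.T α := by rw [← hbα]; exact hu₁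
      have hgmem : (g u₁).1 = TVPre.T b := by rw [hbα]; exact rel_T (hfg u₁) hu₁'
      have hgmin : ∀ w ∈ Set.range g, ∀ c, w.1 = TVPre.T c → b ≤ c := by
        rintro w ⟨u, rfl⟩ c hguc
        rcases hfg u with he | ⟨-, hw1, -⟩
        · exact hminf (f u) ⟨u, rfl⟩ c (he ▸ hguc)
        · rw [hbα]; exact not_lt.1 (fun hc => hw1 ((deg_T hguc).2 hc))
      have hgsup : Wsup (Set.range g) = WT b hb :=
        wsup_T_of hb ⟨g u₁, ⟨u₁, rfl⟩, hgmem⟩ hgmin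
      left; rw [hsf, hgsup]
    · have hexF : ∀ c ≤ α, (Wsup (Set.range g)).1 ≠ TVPre.F c := by
        intro c hcα hsg1
        have hval : (Wsup (Set.range f)).1 = (Wsup (Set.range g)).1 := by
          rw [hcongr (hcl1 c hcα hsg1)]
        rw [hsf1, hsg1] at hval
        exact TVPre.noConfusion hval
      have hexT : ∀ c < α, (Wsup (Set.range g)).1 ≠ TVPre.T c := by
        intro c hcα hsg1
        obtain ⟨u, hu⟩ := hcl2 c hcα hsg1
        exact absurd (lt_of_le_of_lt (hminf (f u) ⟨u, rfl⟩ c hu) hcα)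
          (not_lt.2 hbα.le)
      rcases W.cases3 (Wsup (Set.range g)) with ⟨c, hc, hsg⟩ | hsg | ⟨c, hc, hsg⟩
      · have hsg1 : (Wsup (Set.range g)).1 = TVPre.F c := by rw [hsg]; rfl
        rcases le_or_gt c α with hcα | hcα
        · exact absurd hsg1 (hexF c hcα)
        · exact Or.inr ⟨Lmem_T hbα hsf1, Rmem_F hcα hsg1⟩
      · exact Or.inr ⟨Lmem_T hbα hsf1, Rmem_Z (by rw [hsg]; rfl)⟩
      · have hsg1 : (Wsup (Set.range g)).1 = TVPre.T c := by rw [hsg]; rfl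
        rcases lt_or_ge c α with hcα | hcα
        · exact absurd hsg1 (hexT c hcα)
        · exact Or.inr ⟨Lmem_T hbα hsf1, Rmem_T hcα hsg1⟩

lemma Rel.winf {ι : Sort*} {f g : ι → W} (hfg : ∀ u, Rel α (f u) (g u))
    (hα : α < omega1) : Rel α (Winf (Set.range f)) (Winf (Set.range g)) := by
  have hcongr : (∀ u, f u = g u) → Winf (Set.range f) = Winf (Set.range g) := by
    intro he; rw [funext he]
  have icl1 : ∀ b ≤ α, (Winf (Set.range f)).1 = TVPre.T b → ∀ u, g u = f u := by
    intro b hb hT u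
    obtain ⟨c, hc, hfu⟩ := winf_T_char hT (f u) ⟨u, rfl⟩
    rcases lt_or_eq_of_le (hc.trans hb) with hlt | heq
    · exact rel_left_deg (hfg u) ((deg_T hfu).2 hlt)
    · have hfu' : (f u).1 = TVPre.T α := by rw [← heq]; exact hfu
      exact W.ext' (by rw [rel_T (hfg u) hfu', hfu'])
  have icl2 : ∀ c ≤ α, (Winf (Set.range g)).1 = TVPre.F c → ∃ u, (f u).1 = TVPre.F c := by
    intro c hc hF
    obtain ⟨⟨w, ⟨u, rfl⟩, hw⟩, -⟩ := winf_F_iff.1 hF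
    rcases lt_or_eq_of_le hc with hlt | heq
    · exact ⟨u, by rw [rel_right_deg (hfg u) ((deg_F hw).2 hlt)]; exact hw⟩
    · have hw' : (g u).1 = TVPre.F α := by rw [← heq]; exact hw
      exact ⟨u, by rw [heq]; exact rel_F (hfg u) hw'⟩
  have icl3 : ∀ c < α, (Winf (Set.range g)).1 = TVPre.T c → ∀ u, f u = g u := by
    intro c hc hT u
    obtain ⟨d, hd, hgu⟩ := winf_T_char hT (g u) ⟨u, rfl⟩
    exact rel_right_deg (hfg u) ((deg_T hgu).2 (lt_of_le_of_lt hd hc))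
  rcases W.cases3 (Winf (Set.range f)) with ⟨b, hb, hsf⟩ | hsf | ⟨b, hb, hsf⟩
  · have hsf1 : (Winf (Set.range f)).1 = TVPre.F b := by rw [hsf]; rfl
    obtain ⟨⟨w, ⟨u₁, rfl⟩, hu₁⟩, hminf⟩ := winf_F_iff.1 hsf1
    have hexT : ∀ c < α, (Winf (Set.range g)).1 ≠ TVPre.T c := by
      intro c hcα hsg1
      have hval : (Winf (Set.range f)).1 = (Winf (Set.range g)).1 := by
        rw [hcongr (icl3 c hcα hsg1)]
      rw [hsf1, hsg1] at hval
      exact TVPre.noConfusion hval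
    rcases lt_trichotomy b α with hbα | hbα | hbα
    · have hgmem : (g u₁).1 = TVPre.F b := by
        rw [rel_left_deg (hfg u₁) ((deg_F hu₁).2 hbα)]; exact hu₁
      have hgmin : ∀ w ∈ Set.range g, ∀ c, w.1 = TVPre.F c → b ≤ c := by
        rintro w ⟨u, rfl⟩ c hguc
        rcases hfg u with he | ⟨⟨-, -⟩, hw1, hw2⟩
        · exact hminf (f u) ⟨u, rfl⟩ c (he ▸ hguc)
        · have hαc : α < c := (not_lt.1 (fun hc' => hw1 ((deg_F hguc).2 hc'))).lt_of_ne
            (fun he => hw2 (by rw [hguc, he]))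
          exact le_of_lt (hbα.trans hαc)
      have hgsup : Winf (Set.range g) = WF b hb :=
        winf_F_of hb ⟨g u₁, ⟨u₁, rfl⟩, hgmem⟩ hgmin
      left; rw [hsf, hgsup]
    · have hexF : ∀ c < α, (Winf (Set.range g)).1 ≠ TVPre.F c := by
        intro c hcα hsg1
        obtain ⟨u, hu⟩ := icl2 c hcα.le hsg1
        exact absurd (hminf (f u) ⟨u, rfl⟩ c hu) (not_le.2 (hbα ▸ hcα))
      rcases W.cases3 (Winf (Set.range g)) with ⟨c, hc, hsg⟩ | hsg | ⟨c, hc, hsg⟩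
      · have hsg1 : (Winf (Set.range g)).1 = TVPre.F c := by rw [hsg]; rfl
        rcases lt_trichotomy c α with hcα | hcα | hcα
        · exact absurd hsg1 (hexF c hcα)
        · left
          rw [hsf, hsg]
          rw [WF_eq_WF]
          rw [hbα, hcα]
        · exact Or.inr ⟨Lmem_F hbα.ge hsf1, Rmem_F hcα hsg1⟩
      · exact Or.inr ⟨Lmem_F hbα.ge hsf1, Rmem_Z (by rw [hsg]; rfl)⟩
      · have hsg1 : (Winf (Set.range g)).1 = TVPre.T c := by rw [hsg]; rfl
        rcases lt_or_ge c α with hcα | hcα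
        · exact absurd hsg1 (hexT c hcα)
        · exact Or.inr ⟨Lmem_F hbα.ge hsf1, Rmem_T hcα hsg1⟩
    · have hexF : ∀ c ≤ α, (Winf (Set.range g)).1 ≠ TVPre.F c := by
        intro c hcα hsg1
        obtain ⟨u, hu⟩ := icl2 c hcα hsg1
        exact absurd (hminf (f u) ⟨u, rfl⟩ c hu)
          (not_le.2 (lt_of_le_of_lt hcα hbα))
      rcases W.cases3 (Winf (Set.range g)) with ⟨c, hc, hsg⟩ | hsg | ⟨c, hc, hsg⟩
      · have hsg1 : (Winf (Set.range g)).1 = TVPre.F c := by rw [hsg]; rfl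
        rcases le_or_gt c α with hcα | hcα
        · exact absurd hsg1 (hexF c hcα)
        · exact Or.inr ⟨Lmem_F hbα.le hsf1, Rmem_F hcα hsg1⟩
      · exact Or.inr ⟨Lmem_F hbα.le hsf1, Rmem_Z (by rw [hsg]; rfl)⟩
      · have hsg1 : (Winf (Set.range g)).1 = TVPre.T c := by rw [hsg]; rfl
        rcases lt_or_ge c α with hcα | hcα
        · exact absurd hsg1 (hexT c hcα)
        · exact Or.inr ⟨Lmem_F hbα.le hsf1, Rmem_T hcα hsg1⟩
  · have hsf1 : (Winf (Set.range f)).1 = TVPre.zero := by rw [hsf]; rfl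
    have hexF : ∀ c ≤ α, (Winf (Set.range g)).1 ≠ TVPre.F c := by
      intro c hcα hsg1
      obtain ⟨u, hu⟩ := icl2 c hcα hsg1
      exact absurd hu (winf_zero_char hsf1 (f u) ⟨u, rfl⟩ c)
    have hexT : ∀ c < α, (Winf (Set.range g)).1 ≠ TVPre.T c := by
      intro c hcα hsg1
      have hval : (Winf (Set.range f)).1 = (Winf (Set.range g)).1 := by
        rw [hcongr (icl3 c hcα hsg1)]
      rw [hsf1, hsg1] at hval
      exact TVPre.noConfusion hval
    rcases W.cases3 (Winf (Set.range g)) with ⟨c, hc, hsg⟩ | hsg | ⟨c, hc, hsg⟩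
    · have hsg1 : (Winf (Set.range g)).1 = TVPre.F c := by rw [hsg]; rfl
      rcases le_or_gt c α with hcα | hcα
      · exact absurd hsg1 (hexF c hcα)
      · exact Or.inr ⟨Lmem_Z hsf1, Rmem_F hcα hsg1⟩
    · exact Or.inr ⟨Lmem_Z hsf1, Rmem_Z (by rw [hsg]; rfl)⟩
    · have hsg1 : (Winf (Set.range g)).1 = TVPre.T c := by rw [hsg]; rfl
      rcases lt_or_ge c α with hcα | hcα
      · exact absurd hsg1 (hexT c hcα)
      · exact Or.inr ⟨Lmem_Z hsf1, Rmem_T hcα hsg1⟩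
  · have hsf1 : (Winf (Set.range f)).1 = TVPre.T b := by rw [hsf]; rfl
    rcases lt_trichotomy b α with hbα | hbα | hbα
    · refine Or.inl (hcongr fun u => ?_)
      obtain ⟨c, hc, hfu⟩ := winf_T_char hsf1 (f u) ⟨u, rfl⟩
      exact (rel_left_deg (hfg u) ((deg_T hfu).2 (lt_of_le_of_lt hc hbα))).symm
    · exact Or.inl (hcongr fun u => (icl1 b hbα.le hsf1 u).symm)
    · have hexF : ∀ c ≤ α, (Winf (Set.range g)).1 ≠ TVPre.F c := by
        intro c hcα hsg1
        obtain ⟨u, hu⟩ := icl2 c hcα hsg1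
        obtain ⟨d, -, hfu⟩ := winf_T_char hsf1 (f u) ⟨u, rfl⟩
        rw [hfu] at hu; exact TVPre.noConfusion hu
      have hexT : ∀ c < α, (Winf (Set.range g)).1 ≠ TVPre.T c := by
        intro c hcα hsg1
        have hval : (Winf (Set.range f)).1 = (Winf (Set.range g)).1 := by
          rw [hcongr (icl3 c hcα hsg1)]
        rw [hsf1, hsg1] at hval
        exact absurd ((TVPre.T.inj hval) ▸ hcα) (not_lt.2 hbα.le)
      rcases W.cases3 (Winf (Set.range g)) with ⟨c, hc, hsg⟩ | hsg | ⟨c, hc, hsg⟩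
      · have hsg1 : (Winf (Set.range g)).1 = TVPre.F c := by rw [hsg]; rfl
        rcases le_or_gt c α with hcα | hcα
        · exact absurd hsg1 (hexF c hcα)
        · exact Or.inr ⟨Lmem_T hbα hsf1, Rmem_F hcα hsg1⟩
      · exact Or.inr ⟨Lmem_T hbα hsf1, Rmem_Z (by rw [hsg]; rfl)⟩
      · have hsg1 : (Winf (Set.range g)).1 = TVPre.T c := by rw [hsg]; rfl
        rcases lt_or_ge c α with hcα | hcα
        · exact absurd hsg1 (hexT c hcα)
        · exact Or.inr ⟨Lmem_T hbα hsf1, Rmem_T hcα hsg1⟩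

lemma rel_eval {α : Ordinal} (hα : α < omega1) {I J : Interp L}
    (hIJ : ∀ A, Rel α (I A) (J A)) :
    ∀ (φ : Formula L) (h : ℕ → HU L), Rel α (φ.eval I h) (φ.eval J h) := by
  intro φ
  induction φ with
  | verum => intro h; exact Rel.refl _
  | falsum => intro h; exact Rel.refl _
  | atom p ts => intro h; exact hIJ _
  | neg φ ih => intro h; exact (ih h).neg
  | conj φ ψ ihφ ihψ => intro h; exact (ihφ h).min' (ihψ h) hα
  | disj φ ψ ihφ ihψ => intro h; exact (ihφ h).max' (ihψ h) hα
  | ex v φ ih => intro h; exact Rel.wsup (fun u => ih _) hα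
  | all v φ ih => intro h; exact Rel.winf (fun u => ih _) hα

lemma TP_eq (P : Program L) (J : Interp L) (A : GroundAtom L) :
    TP P J A = Wsup (Set.range fun p : {φ : Formula L // (A, φ) ∈ groundInstances P} =>
      Formula.evalClosed J p.1) := by
  rw [TP]
  congr 1
  ext w
  constructor
  · rintro ⟨φ, hm, rfl⟩; exact ⟨⟨φ, hm⟩, rfl⟩
  · rintro ⟨⟨φ, hm⟩, rfl⟩; exact ⟨φ, hm, rfl⟩

lemma rel_TP {α : Ordinal} (hα : α < omega1) {P : Program L} {I J : Interp L}
    (hIJ : ∀ A, Rel α (I A) (J A)) (A : GroundAtom L) :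
    Rel α (TP P I A) (TP P J A) := by
  rw [TP_eq, TP_eq]
  exact Rel.wsup (fun p => rel_eval hα hIJ p.1 _) hα

end RelSup
section Iter

variable {L : Language}

lemma degLT_cases {x : W} {α : Ordinal} (h : degLT x α) :
    (∃ a < α, x.1 = TVPre.F a) ∨ (∃ a < α, x.1 = TVPre.T a) := by
  rcases W.cases3 x with ⟨a, ha, rfl⟩ | rfl | ⟨a, ha, rfl⟩
  · exact Or.inl ⟨a, h, rfl⟩
  · exact absurd h (by simp)
  · exact Or.inr ⟨a, h, rfl⟩

lemma iter_zero (P : Program L) (α : Ordinal) (hα : α < omega1) (I : Interp L) :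
    iter P α hα I 0 = I :=
  Ordinal.limitRecOn_zero _ _ _

lemma iter_succ (P : Program L) (α : Ordinal) (hα : α < omega1) (I : Interp L)
    (β : Ordinal) :
    iter P α hα I (Order.succ β) = TP P (iter P α hα I β) :=
  Ordinal.limitRecOn_succ _ _ _ _

lemma iter_limit (P : Program L) (α : Ordinal) (hα : α < omega1) (I : Interp L)
    {β : Ordinal} (hβ : Order.IsSuccLimit β) (A : GroundAtom L) :
    iter P α hα I β A =
      if degLT (I A) α then I A
      else if ∃ γ, ∃ _ : γ < β, (iter P α hα I γ A).1 = TVPre.T α then WT α hα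
      else if ∀ γ, ∀ _ : γ < β, (iter P α hα I γ A).1 = TVPre.F α then WF α hα
      else WF (α + 1) (succ_lt_omega1 hα) := by
  show (iter P α hα I β) A = _
  rw [iter]
  erw [Ordinal.limitRecOn_limit _ _ _ _ hβ]
  rfl

lemma iter_limit_cases (P : Program L) (α : Ordinal) (hα : α < omega1) (I : Interp L)
    {β : Ordinal} (hβ : Order.IsSuccLimit β) (A : GroundAtom L) :
    (degLT (I A) α ∧ iter P α hα I β A = I A) ∨
    (¬ degLT (I A) α ∧ (∃ γ, ∃ _ : γ < β, (iter P α hα I γ A).1 = TVPre.T α) ∧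
      iter P α hα I β A = WT α hα) ∨
    (¬ degLT (I A) α ∧ ¬ (∃ γ, ∃ _ : γ < β, (iter P α hα I γ A).1 = TVPre.T α) ∧
      (∀ γ, ∀ _ : γ < β, (iter P α hα I γ A).1 = TVPre.F α) ∧
      iter P α hα I β A = WF α hα) ∨
    (¬ degLT (I A) α ∧ ¬ (∃ γ, ∃ _ : γ < β, (iter P α hα I γ A).1 = TVPre.T α) ∧
      ¬ (∀ γ, ∀ _ : γ < β, (iter P α hα I γ A).1 = TVPre.F α) ∧
      iter P α hα I β A = WF (α + 1) (succ_lt_omega1 hα)) := by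
  rw [iter_limit P α hα I hβ A]
  split_ifs with h1 h2 h3
  · exact .inl ⟨h1, rfl⟩
  · exact .inr (.inl ⟨h1, h2, rfl⟩)
  · exact .inr (.inr (.inl ⟨h1, h2, h3, rfl⟩))
  · exact .inr (.inr (.inr ⟨h1, h2, h3, rfl⟩))

lemma rel_evalClosed {α : Ordinal} (hα : α < omega1) {I J : Interp L}
    (hIJ : ∀ A, Rel α (I A) (J A)) (φ : Formula L) :
    Rel α (Formula.evalClosed I φ) (Formula.evalClosed J φ) :=
  rel_eval hα hIJ φ _

theorem chain_thm (P : Program L) (α : Ordinal) (hα : α < omega1) (I : Interp L)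
    (hI : ∀ A, Rel α (I A) (TP P I A)) (j : Ordinal) :
    (∀ i ≤ j, ∀ A, Rel α (iter P α hα I i A) (iter P α hα I j A)) ∧
      (∀ A, Rel α (iter P α hα I j A) (TP P (iter P α hα I j) A)) := by
  induction j using Ordinal.limitRecOn with
  | zero =>
    refine ⟨fun i hi A => ?_, fun A => ?_⟩
    · rw [nonpos_iff_eq_zero.1 hi]; exact Rel.refl _
    · rw [iter_zero]; exact hI A
  | add_one o ih =>
    rw [Ordinal.add_one_eq_succ]
    constructor
    · intro i hi A
      rcases eq_or_lt_of_le hi with rfl | hi'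
      · exact Rel.refl _
      · have h1 := ih.1 i (Order.lt_succ_iff.1 hi') A
        have h2 : Rel α (iter P α hα I o A) (iter P α hα I (Order.succ o) A) := by
          rw [iter_succ]; exact ih.2 A
        exact h1.trans h2
    · intro A
      rw [iter_succ]
      exact rel_TP hα ih.2 A
  | limit o ho ih =>
    have hbase : ∀ γ, γ < o → ∀ A, Rel α (I A) (iter P α hα I γ A) := by
      intro γ hγ A
      have := (ih γ hγ).1 0 (zero_le : 0 ≤ γ) A
      rwa [iter_zero] at this
    have hlim : ∀ γ, γ < o → ∀ A, Rel α (iter P α hα I γ A) (iter P α hα I o A) := by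
      intro γ hγ A
      have hnd : ¬ degLT (I A) α → ¬ degLT (iter P α hα I γ A) α := fun h =>
        rel_not_deg (hbase γ hγ A) h
      rcases iter_limit_cases P α hα I ho A with ⟨h1, hval⟩ | ⟨h1, h2, hval⟩ |
        ⟨h1, h2, h3, hval⟩ | ⟨h1, h2, h3, hval⟩
      · rw [hval, rel_left_deg (hbase γ hγ A) h1]; exact Rel.refl _
      · rw [hval]
        by_cases hT : (iter P α hα I γ A).1 = TVPre.T α
        · exact Or.inl (W.ext' (by rw [hT, WT_val]))
        · exact Or.inr ⟨⟨hnd h1, hT⟩, ⟨by simp, by simp⟩⟩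
      · rw [hval]
        exact Or.inl (W.ext' (by rw [h3 γ hγ, WF_val]))
      · rw [hval]
        push_neg at h2
        refine Or.inr ⟨⟨hnd h1, h2 γ hγ⟩, ⟨?_, ?_⟩⟩
        · simp only [degLT_WF]
          exact not_lt.2 (lt_add_one_of_le le_rfl).le
        · simp only [WF_val]
          exact fun he => (lt_add_one_of_le (le_refl α)).ne' (TVPre.F.inj he)
    refine ⟨fun i hi A => ?_, ?_⟩
    · rcases eq_or_lt_of_le hi with rfl | hi'
      · exact Rel.refl _
      · exact hlim i hi' A
    intro A
    have hbase' : ∀ A', Rel α (I A') (iter P α hα I o A') := by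
      intro A'
      have := hlim 0 ho.pos A'
      rwa [iter_zero] at this
    have hTPrel : ∀ A', Rel α (TP P I A') (TP P (iter P α hα I o) A') :=
      rel_TP hα hbase'
    have helemT : ¬ degLT (I A) α → ∀ (q : {φ : Formula L // (A, φ) ∈ groundInstances P}),
        ∀ c < α, (Formula.evalClosed (iter P α hα I o) q.1).1 ≠ TVPre.T c := by
      intro h1 q c hcα hq
      have hqI : Formula.evalClosed I q.1 = Formula.evalClosed (iter P α hα I o) q.1 :=
        rel_right_deg (rel_evalClosed hα hbase' q.1) ((deg_T hq).2 hcα)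
      obtain ⟨d, hd, hTPd⟩ : ∃ d ≤ c, (TP P I A).1 = TVPre.T d := by
        rw [TP_eq]
        exact wsup_T_lower ⟨q, rfl⟩
          (show (Formula.evalClosed I q.1).1 = TVPre.T c by rw [hqI]; exact hq)
      have hdeg : degLT (TP P I A) α := (deg_T hTPd).2 (lt_of_le_of_lt hd hcα)
      have heq := rel_right_deg (hI A) hdeg
      exact h1 (by rw [heq]; exact hdeg)
    have hexT : ¬ degLT (I A) α → ∀ c < α,
        (TP P (iter P α hα I o) A).1 ≠ TVPre.T c := by
      intro h1 c hcα hTc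
      rw [TP_eq] at hTc
      obtain ⟨⟨w, ⟨q, rfl⟩, hq⟩, -⟩ := wsup_T_iff.1 hTc
      exact helemT h1 q c hcα hq
    have hexF : ¬ degLT (I A) α → ∀ c < α,
        (TP P (iter P α hα I o) A).1 ≠ TVPre.F c := by
      intro h1 c hcα hFc
      rw [TP_eq] at hFc
      have hall : ∀ q : {φ : Formula L // (A, φ) ∈ groundInstances P},
          Formula.evalClosed I q.1 = Formula.evalClosed (iter P α hα I o) q.1 := by
        intro q
        obtain ⟨d, hd, hq⟩ := wsup_F_char hFc _ ⟨q, rfl⟩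
        exact rel_right_deg (rel_evalClosed hα hbase' q.1)
          ((deg_F hq).2 (lt_of_le_of_lt hd hcα))
      have hTPI : (TP P I A).1 = TVPre.F c := by
        rw [TP_eq, funext hall]
        exact hFc
      have hdeg : degLT (TP P I A) α := (deg_F hTPI).2 hcα
      have heq := rel_right_deg (hI A) hdeg
      exact h1 (by rw [heq]; exact hdeg)
    have hnotdeg : ¬ degLT (I A) α → ¬ degLT (TP P (iter P α hα I o) A) α := by
      intro h1 hd
      rcases degLT_cases hd with ⟨c, hcα, hw⟩ | ⟨c, hcα, hw⟩
      · exact hexF h1 c hcα hw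
      · exact hexT h1 c hcα hw
    rcases iter_limit_cases P α hα I ho A with ⟨h1, hval⟩ | ⟨h1, h2, hval⟩ |
      ⟨h1, h2, h3, hval⟩ | ⟨h1, h2, h3, hval⟩
    · have h0 : Rel α (I A) (TP P (iter P α hα I o) A) := (hI A).trans (hTPrel A)
      have heq : TP P (iter P α hα I o) A = I A := rel_left_deg h0 h1
      rw [hval, heq]; exact Rel.refl _
    · -- some earlier iterate takes the value T_α
      obtain ⟨γ₀, hγ₀, hT⟩ := h2
      have hstep : (TP P (iter P α hα I γ₀) A).1 = TVPre.T α :=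
        rel_T ((ih γ₀ hγ₀).2 A) hT
      rw [TP_eq] at hstep
      obtain ⟨⟨w, ⟨p, rfl⟩, hw⟩, -⟩ := wsup_T_iff.1 hstep
      have hpJ : (Formula.evalClosed (iter P α hα I o) p.1).1 = TVPre.T α :=
        rel_T (rel_evalClosed hα (hlim γ₀ hγ₀) p.1) hw
      have hmin : ∀ w ∈ Set.range (fun q : {φ : Formula L // (A, φ) ∈ groundInstances P} =>
          Formula.evalClosed (iter P α hα I o) q.1), ∀ c, w.1 = TVPre.T c → α ≤ c := by
        rintro w ⟨q, rfl⟩ c hqc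
        exact not_lt.1 (fun hcα => helemT h1 q c hcα hqc)
      have hTPval : TP P (iter P α hα I o) A = WT α hα := by
        rw [TP_eq]
        exact wsup_T_of hα ⟨_, ⟨p, rfl⟩, hpJ⟩ hmin
      rw [hval, hTPval]; exact Rel.refl _
    · -- all earlier iterates take the value F_α
      rw [hval]
      by_cases hFα : (TP P (iter P α hα I o) A).1 = TVPre.F α
      · exact Or.inl (W.ext' (by rw [hFα, WF_val]))
      · exact Or.inr ⟨⟨by simp, by simp⟩, hnotdeg h1, hFα⟩
    · -- the "otherwise" case
      rw [hval]
      refine Or.inr ⟨⟨?_, ?_⟩, hnotdeg h1, ?_⟩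
      · simp only [degLT_WF]
        exact not_lt.2 (lt_add_one_of_le le_rfl).le
      · simp only [WF_val]
        exact fun he => TVPre.noConfusion he
      · intro hFα
        have hstepF : ∀ γ, γ < o → (TP P (iter P α hα I γ) A).1 = TVPre.F α := by
          intro γ hγ
          have hFα' := hFα
          rw [TP_eq] at hFα'
          have hall : ∀ q : {φ : Formula L // (A, φ) ∈ groundInstances P},
              Formula.evalClosed (iter P α hα I γ) q.1 =
                Formula.evalClosed (iter P α hα I o) q.1 := by
            intro q
            have hrel := rel_evalClosed hα (hlim γ hγ) q.1
            obtain ⟨d, hd, hq⟩ := wsup_F_char hFα' _ ⟨q, rfl⟩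
            rcases lt_or_eq_of_le hd with hlt | heq
            · exact rel_right_deg hrel ((deg_F hq).2 hlt)
            · have hq' : (Formula.evalClosed (iter P α hα I o) q.1).1 = TVPre.F α :=
                heq ▸ hq
              exact W.ext' (by rw [rel_F hrel hq', hq'])
          rw [TP_eq, funext hall]
          exact hFα'
        push_neg at h3
        obtain ⟨γ₀, hγ₀, hne⟩ := h3
        exact hne (rel_F ((ih γ₀ hγ₀).2 A) (hstepF γ₀ hγ₀))

end Iter
section Countability

variable {L : Language}

/-- An injective coding of terms into `ℕ`. -/
def termCode : Term L → ℕ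
  | .var n => Nat.pair 0 n
  | .const c => Nat.pair 1 c.val
  | .func f ts => Nat.pair 2 (Nat.pair f.val
      ((List.ofFn fun i => termCode (ts i)).foldr Nat.pair 0))

lemma foldr_pair_inj : ∀ {l1 l2 : List ℕ}, l1.length = l2.length →
    l1.foldr Nat.pair 0 = l2.foldr Nat.pair 0 → l1 = l2 := by
  intro l1
  induction l1 with
  | nil => intro l2 hl _; exact (List.length_eq_zero_iff.1 hl.symm).symm
  | cons a l ih =>
    intro l2 hl he
    cases l2 with
    | nil => exact absurd hl (by simp)
    | cons b l' =>
      simp only [List.foldr_cons, Nat.pair_eq_pair] at he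
      simp only [List.length_cons, Nat.add_right_cancel_iff] at hl
      rw [he.1, ih hl he.2]

lemma termCode_inj : ∀ {t s : Term L}, termCode t = termCode s → t = s := by
  intro t
  induction t with
  | var n =>
    intro s h
    cases s with
    | var m => simp only [termCode, Nat.pair_eq_pair] at h; rw [h.2]
    | const c => exact absurd h (by simp [termCode, Nat.pair_eq_pair])
    | func g ss => exact absurd h (by simp [termCode, Nat.pair_eq_pair])
  | const c =>
    intro s h
    cases s with
    | var m => exact absurd h (by simp [termCode, Nat.pair_eq_pair])
    | const c' =>
      simp only [termCode, Nat.pair_eq_pair] at h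
      rw [Fin.val_injective h.2]
    | func g ss => exact absurd h (by simp [termCode, Nat.pair_eq_pair])
  | func f ts ih =>
    intro s h
    cases s with
    | var m => exact absurd h (by simp [termCode, Nat.pair_eq_pair])
    | const c => exact absurd h (by simp [termCode, Nat.pair_eq_pair])
    | func g ss =>
      simp only [termCode, Nat.pair_eq_pair] at h
      obtain ⟨-, hfg, hl⟩ := h
      have hfg' : f = g := Fin.val_injective hfg
      subst hfg'
      have hlen : (List.ofFn fun i => termCode (ts i)).length =
          (List.ofFn fun i => termCode (ss i)).length := by simp
      have hof := foldr_pair_inj hlen hl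
      rw [List.ofFn_inj] at hof
      have hts : ts = ss := funext fun i => ih i (congrFun hof i)
      rw [hts]

instance : Countable (Term L) := ⟨⟨termCode, fun _ _ h => termCode_inj h⟩⟩

instance : Countable (HU L) := Subtype.countable

lemma bound_lt_omega1 {ι : Type} [Countable ι] (g : ι → Ordinal.{0})
    (hg : ∀ u, g u < omega1) : ∃ k < omega1, ∀ u, g u ≤ k := by
  refine ⟨iSup g, ?_, fun u => Ordinal.le_iSup g u⟩
  have h1 : omega1 = (Cardinal.aleph 1).ord := (Cardinal.ord_aleph 1).symm
  rw [h1]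
  rw [Cardinal.ord_aleph]; exact Ordinal.iSup_lt_omega_one hg

end Countability
section Main

variable {L : Language}

lemma rel_base (P : Program L) (α : Ordinal) (hα : α < omega1) (I : Interp L)
    (hI : ∀ A, Rel α (I A) (TP P I A)) (i : Ordinal) :
    ∀ A, Rel α (I A) (iter P α hα I i A) := by
  intro A
  have := (chain_thm P α hα I hI i).1 0 (zero_le : 0 ≤ i) A
  rwa [iter_zero] at this

lemma rel_chain (P : Program L) (α : Ordinal) (hα : α < omega1) (I : Interp L)
    (hI : ∀ A, Rel α (I A) (TP P I A)) {i j : Ordinal} (hij : i ≤ j) :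
    ∀ A, Rel α (iter P α hα I i A) (iter P α hα I j A) :=
  fun A => (chain_thm P α hα I hI j).1 i hij A

lemma eval_const (P : Program L) (α : Ordinal) (hα : α < omega1) (I : Interp L)
    (hI : ∀ A, Rel α (I A) (TP P I A)) {φ : Formula L} {h : ℕ → HU L}
    {i : Ordinal} (hd : degLT (φ.eval (iter P α hα I i) h) α) (j : Ordinal) :
    φ.eval (iter P α hα I j) h = φ.eval (iter P α hα I i) h := by
  have hb := rel_right_deg (rel_eval hα (rel_base P α hα I hI i) φ h) hd
  have hd' : degLT (φ.eval I h) α := by rw [hb]; exact hd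
  rw [rel_left_deg (rel_eval hα (rel_base P α hα I hI j) φ h) hd']
  exact hb

lemma ge_of_F (P : Program L) (α : Ordinal) (hα : α < omega1) (I : Interp L)
    (hI : ∀ A, Rel α (I A) (TP P I A)) {φ : Formula L} {h : ℕ → HU L}
    {i b : Ordinal} (hFb : (φ.eval (iter P α hα I i) h).1 = TVPre.F b)
    (hnd : ¬ degLT (φ.eval I h) α) : α ≤ b := by
  rcases rel_eval hα (rel_base P α hα I hI i) φ h with he | ⟨-, hw1, -⟩
  · rw [← he] at hFb
    exact not_lt.1 (fun hb => hnd ((deg_F hFb).2 hb))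
  · exact not_lt.1 (fun hb => hw1 ((deg_F hFb).2 hb))

/-- Conditions C3 and the converse of C2, proven by structural induction. -/
lemma C3P1 (P : Program L) (α : Ordinal) (hα : α < omega1) (I : Interp L)
    (hI : ∀ A, Rel α (I A) (TP P I A)) (φ : Formula L) : ∀ h : ℕ → HU L,
    ((∀ i, i < omega1 → (φ.eval (iter P α hα I i) h).1 = TVPre.F α) →
      (φ.eval (iter P α hα I omega1) h).1 = TVPre.F α) ∧
    ((φ.eval (iter P α hα I omega1) h).1 = TVPre.T α →
      ∃ i, i < omega1 ∧ (φ.eval (iter P α hα I i) h).1 = TVPre.T α) := by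
  induction φ with
  | verum =>
    intro h
    constructor
    · intro hall
      exact absurd (hall 0 zero_lt_omega1) (by simp [Formula.eval])
    · intro hT
      simp only [Formula.eval, WT_val] at hT ⊢
      exact ⟨0, zero_lt_omega1, hT⟩
  | falsum =>
    intro h
    constructor
    · intro hall
      have h0 := hall 0 zero_lt_omega1
      simp only [Formula.eval, WF_val] at h0 ⊢
      exact h0
    · intro hT
      exact absurd hT (by simp [Formula.eval])
  | atom p ts =>
    intro h
    constructor
    · intro hall
      have hall' : ∀ i, i < omega1 →
          (iter P α hα I i ⟨p, fun k => (ts k).evalT h⟩).1 = TVPre.F α := hall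
      show (iter P α hα I omega1 ⟨p, fun k => (ts k).evalT h⟩).1 = TVPre.F α
      rcases iter_limit_cases P α hα I omega1_isLimit ⟨p, fun k => (ts k).evalT h⟩ with
        ⟨h1, hval⟩ | ⟨h1, ⟨γ, hγ, hT⟩, hval⟩ | ⟨h1, h2, h3, hval⟩ | ⟨h1, h2, h3, hval⟩
      · have h0 := hall' 0 zero_lt_omega1
        rw [iter_zero] at h0
        exact absurd ((deg_F h0).1 h1) (lt_irrefl α)
      · rw [hall' γ hγ] at hT
        exact absurd hT (fun he => TVPre.noConfusion he)
      · rw [hval, WF_val]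
      · exact absurd (fun γ hγ => hall' γ hγ) h3
    · intro hT
      have hT' : (iter P α hα I omega1 ⟨p, fun k => (ts k).evalT h⟩).1 = TVPre.T α := hT
      rcases iter_limit_cases P α hα I omega1_isLimit ⟨p, fun k => (ts k).evalT h⟩ with
        ⟨h1, hval⟩ | ⟨h1, ⟨γ, hγ, hTγ⟩, hval⟩ | ⟨h1, h2, h3, hval⟩ | ⟨h1, h2, h3, hval⟩
      · rw [hval] at hT'
        exact absurd ((deg_T hT').1 h1) (lt_irrefl α)
      · exact ⟨γ, hγ, hTγ⟩
      · rw [hval, WF_val] at hT'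
        exact absurd hT' (fun he => TVPre.noConfusion he)
      · rw [hval, WF_val] at hT'
        exact absurd hT' (fun he => TVPre.noConfusion he)
  | neg φ ih =>
    intro h
    constructor
    · intro hall
      have h0 := hall 0 zero_lt_omega1
      simp only [Formula.eval] at h0 ⊢
      rw [iter_zero] at h0
      rcases W.cases3 (φ.eval I h) with ⟨a, ha, hv⟩ | hv | ⟨a, ha, hv⟩ <;> rw [hv] at h0
      · rw [Wneg_WF, WT_val] at h0
        exact absurd h0 (fun he => TVPre.noConfusion he)
      · rw [Wneg_WZ, WZ_val] at h0
        exact absurd h0 (fun he => TVPre.noConfusion he)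
      · rw [Wneg_WT, WF_val] at h0
        have haα : a < α := by
          rw [← TVPre.F.inj h0]; exact lt_add_one_of_le le_rfl
        have hv1 : (φ.eval I h).1 = TVPre.T a := by rw [hv]; rfl
        have hconst : φ.eval (iter P α hα I omega1) h = φ.eval I h :=
          rel_left_deg (rel_eval hα (rel_base P α hα I hI omega1) φ h)
            ((deg_T hv1).2 haα)
        rw [hconst, hv, Wneg_WT, WF_val]
        exact h0
    · intro hT
      simp only [Formula.eval] at hT ⊢
      rcases W.cases3 (φ.eval (iter P α hα I omega1) h) with ⟨a, ha, hv⟩ | hv |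
        ⟨a, ha, hv⟩ <;> rw [hv] at hT
      · rw [Wneg_WF, WT_val] at hT
        have haα : a < α := by
          rw [← TVPre.T.inj hT]; exact lt_add_one_of_le le_rfl
        refine ⟨0, zero_lt_omega1, ?_⟩
        have hv1 : (φ.eval (iter P α hα I omega1) h).1 = TVPre.F a := by rw [hv]; rfl
        have hc := eval_const P α hα I hI (i := omega1) ((deg_F hv1).2 haα) 0
        rw [hc, hv, Wneg_WF, WT_val]
        exact hT
      · rw [Wneg_WZ, WZ_val] at hT
        exact absurd hT (fun he => TVPre.noConfusion he)
      · rw [Wneg_WT, WF_val] at hT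
        exact absurd hT (fun he => TVPre.noConfusion he)
  | conj φ ψ ihφ ihψ =>
    intro h
    constructor
    · intro hall
      simp only [Formula.eval] at hall ⊢
      by_cases hdφ : degLT (φ.eval I h) α
      · have hconstφ : ∀ j, φ.eval (iter P α hα I j) h = φ.eval I h := fun j =>
          rel_left_deg (rel_eval hα (rel_base P α hα I hI j) φ h) hdφ
        rcases degLT_cases hdφ with ⟨b, hbα, hvb⟩ | ⟨b, hbα, hvb⟩
        · exfalso
          have h0 := hall 0 zero_lt_omega1
          rcases min_choice (φ.eval (iter P α hα I 0) h) (ψ.eval (iter P α hα I 0) h)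
            with hm | hm <;> rw [hm] at h0
          · rw [hconstφ 0, hvb] at h0
            exact absurd (TVPre.F.inj h0 ▸ hbα) (lt_irrefl α)
          · have hle := min_eq_right_iff.1 hm
            obtain ⟨a, hab, hψa⟩ := le_F_char (by rw [hconstφ 0]; exact hvb) hle
            rw [h0] at hψa
            have haeq : α = a := TVPre.F.inj hψa
            rw [← haeq] at hab
            exact absurd hbα (not_lt.2 hab)
        · have hallψ : ∀ i, i < omega1 → (ψ.eval (iter P α hα I i) h).1 = TVPre.F α := by
            intro i hi
            have h0 := hall i hi
            rcases min_choice (φ.eval (iter P α hα I i) h) (ψ.eval (iter P α hα I i) h)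
              with hm | hm <;> rw [hm] at h0
            · rw [hconstφ i, hvb] at h0
              exact absurd h0 (fun he => TVPre.noConfusion he)
            · exact h0
          have hψinf := (ihψ h).1 hallψ
          have hle : ψ.eval (iter P α hα I omega1) h ≤ φ.eval (iter P α hα I omega1) h := by
            refine F_le hψinf ?_
            intro b' he
            rw [hconstφ omega1, hvb] at he
            exact absurd he (fun x => TVPre.noConfusion x)
          rw [min_eq_right hle]
          exact hψinf
      · by_cases hdψ : degLT (ψ.eval I h) α
        · have hconstψ : ∀ j, ψ.eval (iter P α hα I j) h = ψ.eval I h := fun j =>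
            rel_left_deg (rel_eval hα (rel_base P α hα I hI j) ψ h) hdψ
          rcases degLT_cases hdψ with ⟨b, hbα, hvb⟩ | ⟨b, hbα, hvb⟩
          · exfalso
            have h0 := hall 0 zero_lt_omega1
            rcases min_choice (φ.eval (iter P α hα I 0) h) (ψ.eval (iter P α hα I 0) h)
              with hm | hm <;> rw [hm] at h0
            · have hle := min_eq_left_iff.1 hm
              obtain ⟨a, hab, hφa⟩ := le_F_char (by rw [hconstψ 0]; exact hvb) hle
              rw [h0] at hφa
              have haeq : α = a := TVPre.F.inj hφa
              rw [← haeq] at hab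
              exact absurd hbα (not_lt.2 hab)
            · rw [hconstψ 0, hvb] at h0
              exact absurd (TVPre.F.inj h0 ▸ hbα) (lt_irrefl α)
          · have hallφ : ∀ i, i < omega1 → (φ.eval (iter P α hα I i) h).1 = TVPre.F α := by
              intro i hi
              have h0 := hall i hi
              rcases min_choice (φ.eval (iter P α hα I i) h) (ψ.eval (iter P α hα I i) h)
                with hm | hm <;> rw [hm] at h0
              · exact h0
              · rw [hconstψ i, hvb] at h0
                exact absurd h0 (fun he => TVPre.noConfusion he)
            have hφinf := (ihφ h).1 hallφ
            have hle : φ.eval (iter P α hα I omega1) h ≤ ψ.eval (iter P α hα I omega1) h := by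
              refine F_le hφinf ?_
              intro b' he
              rw [hconstψ omega1, hvb] at he
              exact absurd he (fun x => TVPre.noConfusion x)
            rw [min_eq_left hle]
            exact hφinf
        · have hdisj : ∀ i, i < omega1 → (φ.eval (iter P α hα I i) h).1 = TVPre.F α ∨
              (ψ.eval (iter P α hα I i) h).1 = TVPre.F α := by
            intro i hi
            have h0 := hall i hi
            rcases min_choice (φ.eval (iter P α hα I i) h) (ψ.eval (iter P α hα I i) h)
              with hm | hm <;> rw [hm] at h0
            exacts [Or.inl h0, Or.inr h0]
          by_cases hallφ : ∀ i, i < omega1 → (φ.eval (iter P α hα I i) h).1 = TVPre.F α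
          · have hφinf := (ihφ h).1 hallφ
            have hle : φ.eval (iter P α hα I omega1) h ≤ ψ.eval (iter P α hα I omega1) h :=
              F_le hφinf (fun b' he => ge_of_F P α hα I hI he hdψ)
            rw [min_eq_left hle]
            exact hφinf
          · push_neg at hallφ
            obtain ⟨i₀, hi₀, hneφ⟩ := hallφ
            have hallψ : ∀ i, i < omega1 → (ψ.eval (iter P α hα I i) h).1 = TVPre.F α := by
              intro i hi
              have hk : max i i₀ < omega1 := max_lt hi hi₀
              have hφk : (φ.eval (iter P α hα I (max i i₀)) h).1 ≠ TVPre.F α := by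
                intro hFk
                exact hneφ (rel_F (rel_eval hα (rel_chain P α hα I hI
                  (le_max_right i i₀)) φ h) hFk)
              have hψk := (hdisj _ hk).resolve_left hφk
              exact rel_F (rel_eval hα (rel_chain P α hα I hI (le_max_left i i₀)) ψ h) hψk
            have hψinf := (ihψ h).1 hallψ
            have hle : ψ.eval (iter P α hα I omega1) h ≤ φ.eval (iter P α hα I omega1) h :=
              F_le hψinf (fun b' he => ge_of_F P α hα I hI he hdφ)
            rw [min_eq_right hle]
            exact hψinf
    · intro hT
      simp only [Formula.eval] at hT ⊢
      rcases min_choice (φ.eval (iter P α hα I omega1) h) (ψ.eval (iter P α hα I omega1) h)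
        with hm | hm
      · have hTφ : (φ.eval (iter P α hα I omega1) h).1 = TVPre.T α := by rw [← hm]; exact hT
        have hle := min_eq_left_iff.1 hm
        obtain ⟨c, hcα, hψv⟩ := T_le_char hTφ hle
        obtain ⟨i, hi, hTi⟩ := (ihφ h).2 hTφ
        rcases lt_or_eq_of_le hcα with hlt | heq
        · have hc := eval_const P α hα I hI (i := omega1) ((deg_T hψv).2 hlt) i
          refine ⟨i, hi, ?_⟩
          have hle' : φ.eval (iter P α hα I i) h ≤ ψ.eval (iter P α hα I i) h := by
            refine le_T (by rw [hc]; exact hψv) ?_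
            intro b hb
            rw [TVPre.T.inj (hb.symm.trans hTi)]
            exact hcα
          rw [min_eq_left hle']
          exact hTi
        · rw [heq] at hψv
          obtain ⟨j, hj, hTj⟩ := (ihψ h).2 hψv
          refine ⟨max i j, max_lt hi hj, ?_⟩
          have hφk := rel_T (rel_eval hα (rel_chain P α hα I hI (le_max_left i j)) φ h) hTi
          have hψk := rel_T (rel_eval hα (rel_chain P α hα I hI (le_max_right i j)) ψ h) hTj
          have hxy : φ.eval (iter P α hα I (max i j)) h =
              ψ.eval (iter P α hα I (max i j)) h := W.ext' (by rw [hφk, hψk])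
          rw [hxy, min_self]
          exact hψk
      · have hTψ : (ψ.eval (iter P α hα I omega1) h).1 = TVPre.T α := by rw [← hm]; exact hT
        have hle := min_eq_right_iff.1 hm
        obtain ⟨c, hcα, hφv⟩ := T_le_char hTψ hle
        obtain ⟨i, hi, hTi⟩ := (ihψ h).2 hTψ
        rcases lt_or_eq_of_le hcα with hlt | heq
        · have hc := eval_const P α hα I hI (i := omega1) ((deg_T hφv).2 hlt) i
          refine ⟨i, hi, ?_⟩
          have hle' : ψ.eval (iter P α hα I i) h ≤ φ.eval (iter P α hα I i) h := by
            refine le_T (by rw [hc]; exact hφv) ?_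
            intro b hb
            rw [TVPre.T.inj (hb.symm.trans hTi)]
            exact hcα
          rw [min_eq_right hle']
          exact hTi
        · rw [heq] at hφv
          obtain ⟨j, hj, hTj⟩ := (ihφ h).2 hφv
          refine ⟨max i j, max_lt hi hj, ?_⟩
          have hφk := rel_T (rel_eval hα (rel_chain P α hα I hI (le_max_right i j)) φ h) hTj
          have hψk := rel_T (rel_eval hα (rel_chain P α hα I hI (le_max_left i j)) ψ h) hTi
          have hxy : φ.eval (iter P α hα I (max i j)) h =
              ψ.eval (iter P α hα I (max i j)) h := W.ext' (by rw [hφk, hψk])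
          rw [hxy, min_self]
          exact hψk
  | disj φ ψ ihφ ihψ =>
    intro h
    constructor
    · intro hall
      simp only [Formula.eval] at hall ⊢
      by_cases hdφ : degLT (φ.eval I h) α
      · have hconstφ : ∀ j, φ.eval (iter P α hα I j) h = φ.eval I h := fun j =>
          rel_left_deg (rel_eval hα (rel_base P α hα I hI j) φ h) hdφ
        rcases degLT_cases hdφ with ⟨b, hbα, hvb⟩ | ⟨b, hbα, hvb⟩
        · have hallψ : ∀ i, i < omega1 → (ψ.eval (iter P α hα I i) h).1 = TVPre.F α := by
            intro i hi
            have h0 := hall i hi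
            rcases max_choice (φ.eval (iter P α hα I i) h) (ψ.eval (iter P α hα I i) h)
              with hm | hm <;> rw [hm] at h0
            · exfalso
              rw [hconstφ i, hvb] at h0
              exact absurd (TVPre.F.inj h0 ▸ hbα) (lt_irrefl α)
            · exact h0
          have hψinf := (ihψ h).1 hallψ
          have hφv : (φ.eval (iter P α hα I omega1) h).1 = TVPre.F b := by
            rw [hconstφ omega1]; exact hvb
          have hle : φ.eval (iter P α hα I omega1) h ≤ ψ.eval (iter P α hα I omega1) h :=
            (F_le_F_iff hφv hψinf).2 hbα.le
          rw [max_eq_right hle]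
          exact hψinf
        · exfalso
          have h0 := hall 0 zero_lt_omega1
          rcases max_choice (φ.eval (iter P α hα I 0) h) (ψ.eval (iter P α hα I 0) h)
            with hm | hm <;> rw [hm] at h0
          · rw [hconstφ 0, hvb] at h0
            exact TVPre.noConfusion h0
          · have hle := max_eq_right_iff.1 hm
            obtain ⟨c, hc, hψv⟩ := T_le_char (by rw [hconstφ 0]; exact hvb) hle
            rw [h0] at hψv
            exact TVPre.noConfusion hψv
      · by_cases hdψ : degLT (ψ.eval I h) α
        · have hconstψ : ∀ j, ψ.eval (iter P α hα I j) h = ψ.eval I h := fun j =>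
            rel_left_deg (rel_eval hα (rel_base P α hα I hI j) ψ h) hdψ
          rcases degLT_cases hdψ with ⟨b, hbα, hvb⟩ | ⟨b, hbα, hvb⟩
          · have hallφ : ∀ i, i < omega1 → (φ.eval (iter P α hα I i) h).1 = TVPre.F α := by
              intro i hi
              have h0 := hall i hi
              rcases max_choice (φ.eval (iter P α hα I i) h) (ψ.eval (iter P α hα I i) h)
                with hm | hm <;> rw [hm] at h0
              · exact h0
              · exfalso
                rw [hconstψ i, hvb] at h0
                exact absurd (TVPre.F.inj h0 ▸ hbα) (lt_irrefl α)
            have hφinf := (ihφ h).1 hallφ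
            have hψv : (ψ.eval (iter P α hα I omega1) h).1 = TVPre.F b := by
              rw [hconstψ omega1]; exact hvb
            have hle : ψ.eval (iter P α hα I omega1) h ≤ φ.eval (iter P α hα I omega1) h :=
              (F_le_F_iff hψv hφinf).2 hbα.le
            rw [max_eq_left hle]
            exact hφinf
          · exfalso
            have h0 := hall 0 zero_lt_omega1
            rcases max_choice (φ.eval (iter P α hα I 0) h) (ψ.eval (iter P α hα I 0) h)
              with hm | hm <;> rw [hm] at h0
            · have hle := max_eq_left_iff.1 hm
              obtain ⟨c, hc, hφv⟩ := T_le_char (by rw [hconstψ 0]; exact hvb) hle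
              rw [h0] at hφv
              exact TVPre.noConfusion hφv
            · rw [hconstψ 0, hvb] at h0
              exact TVPre.noConfusion h0
        · have hallφ : ∀ i, i < omega1 → (φ.eval (iter P α hα I i) h).1 = TVPre.F α := by
            intro i hi
            have h0 := hall i hi
            rcases max_choice (φ.eval (iter P α hα I i) h) (ψ.eval (iter P α hα I i) h)
              with hm | hm <;> rw [hm] at h0
            · exact h0
            · obtain ⟨a, haα, hφa⟩ := le_F_char h0 (max_eq_right_iff.1 hm)
              have h2 := ge_of_F P α hα I hI hφa hdφ
              rw [le_antisymm haα h2] at hφa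
              exact hφa
          have hallψ : ∀ i, i < omega1 → (ψ.eval (iter P α hα I i) h).1 = TVPre.F α := by
            intro i hi
            have h0 := hall i hi
            rcases max_choice (φ.eval (iter P α hα I i) h) (ψ.eval (iter P α hα I i) h)
              with hm | hm <;> rw [hm] at h0
            · obtain ⟨a, haα, hψa⟩ := le_F_char h0 (max_eq_left_iff.1 hm)
              have h2 := ge_of_F P α hα I hI hψa hdψ
              rw [le_antisymm haα h2] at hψa
              exact hψa
            · exact h0
          have hφinf := (ihφ h).1 hallφ
          have hψinf := (ihψ h).1 hallψ
          have hxy : φ.eval (iter P α hα I omega1) h = ψ.eval (iter P α hα I omega1) h :=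
            W.ext' (by rw [hφinf, hψinf])
          rw [hxy, max_self]
          exact hψinf
    · intro hT
      simp only [Formula.eval] at hT ⊢
      rcases max_choice (φ.eval (iter P α hα I omega1) h) (ψ.eval (iter P α hα I omega1) h)
        with hm | hm
      · have hTφ : (φ.eval (iter P α hα I omega1) h).1 = TVPre.T α := by rw [← hm]; exact hT
        have hle := max_eq_left_iff.1 hm
        obtain ⟨i, hi, hTi⟩ := (ihφ h).2 hTφ
        refine ⟨i, hi, ?_⟩
        have hle' : ψ.eval (iter P α hα I i) h ≤ φ.eval (iter P α hα I i) h := by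
          refine le_T hTi ?_
          intro b hb
          by_contra hbα
          have hbα := not_le.1 hbα
          have hc := eval_const P α hα I hI (i := i) ((deg_T hb).2 hbα) omega1
          have hbv : (ψ.eval (iter P α hα I omega1) h).1 = TVPre.T b := by
            rw [hc]; exact hb
          exact absurd ((T_le_T_iff hbv hTφ).1 hle) (not_le.2 hbα)
        rw [max_eq_left hle']
        exact hTi
      · have hTψ : (ψ.eval (iter P α hα I omega1) h).1 = TVPre.T α := by rw [← hm]; exact hT
        have hle := max_eq_right_iff.1 hm
        obtain ⟨i, hi, hTi⟩ := (ihψ h).2 hTψ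
        refine ⟨i, hi, ?_⟩
        have hle' : φ.eval (iter P α hα I i) h ≤ ψ.eval (iter P α hα I i) h := by
          refine le_T hTi ?_
          intro b hb
          by_contra hbα
          have hbα := not_le.1 hbα
          have hc := eval_const P α hα I hI (i := i) ((deg_T hb).2 hbα) omega1
          have hbv : (φ.eval (iter P α hα I omega1) h).1 = TVPre.T b := by
            rw [hc]; exact hb
          exact absurd ((T_le_T_iff hbv hTψ).1 hle) (not_le.2 hbα)
        rw [max_eq_right hle']
        exact hTi
  | ex v φ ih =>
    intro h
    constructor
    · intro hall
      simp only [Formula.eval] at hall ⊢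
      have hchar : ∀ i, i < omega1 → ∀ u : HU L,
          ∃ c ≤ α, (φ.eval (iter P α hα I i) (Function.update h v u)).1 = TVPre.F c :=
        fun i hi u => wsup_F_char (hall i hi) _ ⟨u, rfl⟩
      have hFα : ∀ u : HU L, ¬ degLT (φ.eval I (Function.update h v u)) α →
          ∀ i, i < omega1 →
          (φ.eval (iter P α hα I i) (Function.update h v u)).1 = TVPre.F α := by
        intro u hu i hi
        obtain ⟨c, hc, hvc⟩ := hchar i hi u
        rcases lt_or_eq_of_le hc with hlt | heq
        · exact absurd (ge_of_F P α hα I hI hvc hu) (not_le.2 hlt)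
        · rw [heq] at hvc; exact hvc
      by_cases hex : ∃ u : HU L, ¬ degLT (φ.eval I (Function.update h v u)) α
      · obtain ⟨u₀, hu₀⟩ := hex
        have hFu₀ : (φ.eval (iter P α hα I omega1) (Function.update h v u₀)).1 =
            TVPre.F α := (ih (Function.update h v u₀)).1 (hFα u₀ hu₀)
        have hub : ∀ w ∈ Set.range (fun u : HU L =>
            φ.eval (iter P α hα I omega1) (Function.update h v u)),
            ∃ c ≤ α, w.1 = TVPre.F c := by
          rintro w ⟨u, rfl⟩
          by_cases hu : degLT (φ.eval I (Function.update h v u)) α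
          · have hcst : φ.eval (iter P α hα I omega1) (Function.update h v u) =
                φ.eval I (Function.update h v u) :=
              rel_left_deg (rel_eval hα (rel_base P α hα I hI omega1) φ _) hu
            rcases degLT_cases hu with ⟨b, hbα, hvb⟩ | ⟨b, hbα, hvb⟩
            · refine ⟨b, hbα.le, ?_⟩
              show (φ.eval (iter P α hα I omega1) (Function.update h v u)).1 = TVPre.F b
              rw [hcst]; exact hvb
            · obtain ⟨c, -, hvc⟩ := hchar 0 zero_lt_omega1 u
              rw [iter_zero, hvb] at hvc
              exact absurd hvc (fun he => TVPre.noConfusion he)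
          · exact ⟨α, le_rfl, (ih _).1 (hFα u hu)⟩
        have hsup := wsup_F_of (M := Set.range fun u : HU L =>
          φ.eval (iter P α hα I omega1) (Function.update h v u)) hα
          ⟨_, ⟨u₀, rfl⟩, hFu₀⟩ hub
        rw [hsup, WF_val]
      · push_neg at hex
        have hcongr : (fun u : HU L =>
            φ.eval (iter P α hα I omega1) (Function.update h v u)) =
            (fun u : HU L => φ.eval (iter P α hα I 0) (Function.update h v u)) := by
          funext u
          rw [rel_left_deg (rel_eval hα (rel_base P α hα I hI omega1) φ _) (hex u),
            rel_left_deg (rel_eval hα (rel_base P α hα I hI 0) φ _) (hex u)]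
        rw [hcongr]
        exact hall 0 zero_lt_omega1
    · intro hT
      simp only [Formula.eval] at hT ⊢
      obtain ⟨⟨w, ⟨u₁, rfl⟩, hu₁⟩, hmin⟩ := wsup_T_iff.1 hT
      obtain ⟨i, hi, hTi⟩ := (ih (Function.update h v u₁)).2 hu₁
      refine ⟨i, hi, ?_⟩
      have hmini : ∀ w ∈ Set.range (fun u : HU L =>
          φ.eval (iter P α hα I i) (Function.update h v u)),
          ∀ c, w.1 = TVPre.T c → α ≤ c := by
        rintro w ⟨u, rfl⟩ c hc
        by_contra hcα
        have hcα := not_le.1 hcα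
        have hcst := eval_const P α hα I hI (i := i) ((deg_T hc).2 hcα) omega1
        exact absurd (hmin _ ⟨u, rfl⟩ c (by
          show (φ.eval (iter P α hα I omega1) (Function.update h v u)).1 = TVPre.T c
          rw [hcst]; exact hc)) (not_le.2 hcα)
      have hsup := wsup_T_of (M := Set.range fun u : HU L =>
        φ.eval (iter P α hα I i) (Function.update h v u)) hα
        ⟨_, ⟨u₁, rfl⟩, hTi⟩ hmini
      rw [hsup, WT_val]
  | all v φ ih =>
    intro h
    constructor
    · intro hall
      simp only [Formula.eval] at hall ⊢
      have hex : ∃ u : HU L, ∀ i, i < omega1 →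
          (φ.eval (iter P α hα I i) (Function.update h v u)).1 = TVPre.F α := by
        by_contra hno
        push_neg at hno
        choose g hg1 hg2 using hno
        obtain ⟨k, hk, hgk⟩ := bound_lt_omega1 g hg1
        obtain ⟨⟨w, ⟨u, rfl⟩, hu⟩, -⟩ := winf_F_iff.1 (hall k hk)
        exact hg2 u (rel_F (rel_eval hα (rel_chain P α hα I hI (hgk u)) φ _) hu)
      obtain ⟨u₀, hu₀⟩ := hex
      have hFu₀ := (ih (Function.update h v u₀)).1 hu₀
      have hmin : ∀ w ∈ Set.range (fun u : HU L =>
          φ.eval (iter P α hα I omega1) (Function.update h v u)),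
          ∀ c, w.1 = TVPre.F c → α ≤ c := by
        rintro w ⟨u, rfl⟩ c hc
        by_contra hcα
        have hcα := not_le.1 hcα
        obtain ⟨-, hmin0⟩ := winf_F_iff.1 (hall 0 zero_lt_omega1)
        refine absurd (hmin0 _ ⟨u, rfl⟩ c ?_) (not_le.2 hcα)
        show (φ.eval (iter P α hα I 0) (Function.update h v u)).1 = TVPre.F c
        rw [eval_const P α hα I hI (i := omega1) ((deg_F hc).2 hcα) 0]
        exact hc
      have hsup := winf_F_of (M := Set.range fun u : HU L =>
        φ.eval (iter P α hα I omega1) (Function.update h v u)) hα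
        ⟨_, ⟨u₀, rfl⟩, hFu₀⟩ hmin
      rw [hsup, WF_val]
    · intro hT
      simp only [Formula.eval] at hT ⊢
      have hchar := winf_T_char hT
      by_cases hex : ∃ u : HU L,
          (φ.eval (iter P α hα I omega1) (Function.update h v u)).1 = TVPre.T α
      · obtain ⟨u₁, hu₁⟩ := hex
        have hgex : ∀ u : HU L, ∃ i, i < omega1 ∧
            ((φ.eval (iter P α hα I omega1) (Function.update h v u)).1 = TVPre.T α →
            (φ.eval (iter P α hα I i) (Function.update h v u)).1 = TVPre.T α) := by
          intro u
          by_cases hu : (φ.eval (iter P α hα I omega1) (Function.update h v u)).1 =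
              TVPre.T α
          · obtain ⟨i, hi, hTi⟩ := (ih _).2 hu
            exact ⟨i, hi, fun _ => hTi⟩
          · exact ⟨0, zero_lt_omega1, fun he => absurd he hu⟩
        choose g hg1 hg2 using hgex
        obtain ⟨k, hk, hgk⟩ := bound_lt_omega1 g hg1
        refine ⟨k, hk, ?_⟩
        have hmem : (φ.eval (iter P α hα I k) (Function.update h v u₁)).1 = TVPre.T α :=
          rel_T (rel_eval hα (rel_chain P α hα I hI (hgk u₁)) φ _) (hg2 u₁ hu₁)
        have hub : ∀ w ∈ Set.range (fun u : HU L =>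
            φ.eval (iter P α hα I k) (Function.update h v u)),
            ∃ c ≤ α, w.1 = TVPre.T c := by
          rintro w ⟨u, rfl⟩
          obtain ⟨c, hcα, hc⟩ := hchar _ ⟨u, rfl⟩
          rcases lt_or_eq_of_le hcα with hlt | heq
          · refine ⟨c, hcα, ?_⟩
            show (φ.eval (iter P α hα I k) (Function.update h v u)).1 = TVPre.T c
            rw [eval_const P α hα I hI (i := omega1) ((deg_T hc).2 hlt) k]
            exact hc
          · rw [heq] at hc
            exact ⟨α, le_rfl, rel_T (rel_eval hα (rel_chain P α hα I hI (hgk u)) φ _)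
              (hg2 u hc)⟩
        have hsup := winf_T_of (M := Set.range fun u : HU L =>
          φ.eval (iter P α hα I k) (Function.update h v u)) hα
          ⟨_, ⟨u₁, rfl⟩, hmem⟩ hub
        rw [hsup, WT_val]
      · push_neg at hex
        have hcst : (fun u : HU L => φ.eval (iter P α hα I 0) (Function.update h v u)) =
            (fun u : HU L => φ.eval (iter P α hα I omega1) (Function.update h v u)) := by
          funext u
          obtain ⟨c, hcα, hc⟩ := hchar _ ⟨u, rfl⟩
          have hlt : c < α := by
            rcases lt_or_eq_of_le hcα with hlt | heq
            · exact hlt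
            · rw [heq] at hc
              exact absurd hc (hex u)
          exact eval_const P α hα I hI (i := omega1) ((deg_T hc).2 hlt) 0
        refine ⟨0, zero_lt_omega1, ?_⟩
        rw [hcst]
        exact hT

lemma sqa_rel {α : Ordinal} {I J : Interp L} (h : sqa α I J) (A : GroundAtom L) :
    Rel α (I A) (J A) := by
  obtain ⟨h1, h2, h3⟩ := h
  by_cases hdI : degLT (I A) α
  · rcases degLT_cases hdI with ⟨b, hbα, hb⟩ | ⟨b, hbα, hb⟩
    · have hmem : A ∈ Ifalse I b := hb
      rw [(h1 b hbα b le_rfl).1] at hmem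
      exact Or.inl (W.ext' (by rw [hb, hmem]))
    · have hmem : A ∈ Itrue I b := hb
      rw [(h1 b hbα b le_rfl).2] at hmem
      exact Or.inl (W.ext' (by rw [hb, hmem]))
  · by_cases hdJ : degLT (J A) α
    · exfalso
      rcases degLT_cases hdJ with ⟨b, hbα, hb⟩ | ⟨b, hbα, hb⟩
      · have hmem : A ∈ Ifalse J b := hb
        rw [← (h1 b hbα b le_rfl).1] at hmem
        exact hdI ((deg_F hmem).2 hbα)
      · have hmem : A ∈ Itrue J b := hb
        rw [← (h1 b hbα b le_rfl).2] at hmem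
        exact hdI ((deg_T hmem).2 hbα)
    · by_cases hTα : (I A).1 = TVPre.T α
      · have hmem : A ∈ Itrue J α := h3 hTα
        exact Or.inl (W.ext' (by rw [hTα, hmem]))
      · by_cases hFα : (J A).1 = TVPre.F α
        · have hmem : A ∈ Ifalse I α := h2 hFα
          exact Or.inl (W.ext' (by rw [hmem, hFα]))
        · exact Or.inr ⟨⟨hdI, hTα⟩, hdJ, hFα⟩

end Main
/-- Extension Theorem II. -/
theorem extension_theorem_II {L : Language} (P : Program L) (α : Ordinal)
    (hα : α < omega1) (I : Interp L) (hI : sqa α I (TP P I))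
    (φ : Formula L) (h : ℕ → HU L) :
    (degLT (φ.eval I h) α → φ.eval (iter P α hα I omega1) h = φ.eval I h) ∧
    ((∃ i < omega1, φ.eval (iter P α hα I i) h = WT α hα) →
      φ.eval (iter P α hα I omega1) h = WT α hα) ∧
    ((∀ i < omega1, φ.eval (iter P α hα I i) h = WF α hα) →
      φ.eval (iter P α hα I omega1) h = WF α hα) ∧
    ((WF α hα < φ.eval (iter P α hα I omega1) h ∧
        φ.eval (iter P α hα I omega1) h < WT α hα) ↔
      (¬ degLT (φ.eval I h) α ∧
        ¬ (∃ i < omega1, φ.eval (iter P α hα I i) h = WT α hα) ∧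
        ¬ (∀ i < omega1, φ.eval (iter P α hα I i) h = WF α hα))) := by
  have hIrel : ∀ A, Rel α (I A) (TP P I A) := fun A => sqa_rel hI A
  have hC1 : degLT (φ.eval I h) α → φ.eval (iter P α hα I omega1) h = φ.eval I h := by
    intro hdeg
    exact rel_left_deg (rel_eval hα (rel_base P α hα I hIrel omega1) φ h) hdeg
  have hC2 : (∃ i < omega1, φ.eval (iter P α hα I i) h = WT α hα) →
      φ.eval (iter P α hα I omega1) h = WT α hα := by
    rintro ⟨i, hi, hTi⟩
    have hTi' : (φ.eval (iter P α hα I i) h).1 = TVPre.T α := by rw [hTi]; rfl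
    have hv := rel_T (rel_eval hα (rel_chain P α hα I hIrel hi.le) φ h) hTi'
    exact W.ext' (by rw [hv]; rfl)
  have hC3 : (∀ i < omega1, φ.eval (iter P α hα I i) h = WF α hα) →
      φ.eval (iter P α hα I omega1) h = WF α hα := by
    intro hall
    have hall' : ∀ i, i < omega1 → (φ.eval (iter P α hα I i) h).1 = TVPre.F α :=
      fun i hi => by rw [hall i hi]; rfl
    exact W.ext' (by rw [(C3P1 P α hα I hIrel φ h).1 hall']; rfl)
  refine ⟨hC1, hC2, hC3, ?_⟩
  constructor
  · intro hbet
    obtain ⟨hnd, hnF, hnT⟩ := between_iff.1 hbet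
    refine ⟨?_, ?_, ?_⟩
    · intro hdeg
      exact hnd (by rw [hC1 hdeg]; exact hdeg)
    · intro hex
      exact hnT (by rw [hC2 hex]; rfl)
    · intro hall
      exact hnF (by rw [hC3 hall]; rfl)
  · rintro ⟨h1, h2, h3⟩
    apply between_iff.2
    refine ⟨?_, ?_, ?_⟩
    · rcases rel_eval hα (rel_base P α hα I hIrel omega1) φ h with he | ⟨-, hnd2, -⟩
      · rw [← he]; exact h1
      · exact hnd2
    · intro hF
      refine h3 (fun i hi => ?_)
      have hv := rel_F (rel_eval hα (rel_chain P α hα I hIrel hi.le) φ h) hF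
      exact W.ext' (by rw [hv]; rfl)
    · intro hTv
      obtain ⟨i, hi, hTi⟩ := (C3P1 P α hα I hIrel φ h).2 hTv
      exact h2 ⟨i, hi, W.ext' (by rw [hTi]; rfl)⟩

end ILP
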